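/- arXiv:2102.07032 — 7 statements merged into one kernel-verified Lean document; each statement's English description precedes it below -/
import Mathlib

section
/- Fix σ > 0 and M > 0. For ε > 0 let μ_ε denote the centered Gaussian measure on ℝ with variance ε·σ² (the law of √ε·X where X ~ N(0,σ²)). Then ε·log μ_ε([M,∞)) converges to −M²/(2σ²) as ε → 0+. -/
open MeasureTheory ProbabilityTheory Filter Set Topology

/-- **Gaussian tail large deviation.** Fix `σ > 0` and `M > 0`. For `ε > 0`, let `μ_ε` be the
centered Gaussian measure on `ℝ` with variance `ε·σ²` (the law of `√ε·X` with `X ~ N(0,σ²)`).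
Then `ε · log μ_ε([M,∞)) → −M²/(2σ²)` as `ε → 0+`. -/
theorem gaussian_tail_log_limit (σ M : ℝ) (hσ : 0 < σ) (hM : 0 < M) :
    Tendsto
      (fun ε : ℝ =>
        ε * Real.log ((gaussianReal 0 (Real.toNNReal (ε * σ ^ 2)) (Set.Ici M)).toReal))
      (𝓝[>] (0 : ℝ)) (𝓝 (-(M ^ 2 / (2 * σ ^ 2)))) := by
  set c0 : ℝ := (Real.sqrt (2 * Real.pi))⁻¹ with hc0
  have hπ : (0:ℝ) < Real.pi := Real.pi_pos
  have hc0pos : 0 < c0 := by positivity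
  set l : ℝ → ℝ := fun ε => ε * Real.log c0 - (M + σ * Real.sqrt ε) ^ 2 / (2 * σ ^ 2) with hl
  -- the lower function tends to the limit
  have hlim : Tendsto l (𝓝[>] (0:ℝ)) (𝓝 (-(M ^ 2 / (2 * σ ^ 2)))) := by
    have h1 : Tendsto l (𝓝 (0:ℝ))
        (𝓝 ((0:ℝ) * Real.log c0 - (M + σ * Real.sqrt 0) ^ 2 / (2 * σ ^ 2))) := by
      apply Tendsto.sub
      · exact tendsto_id.mul tendsto_const_nhds
      · exact ((tendsto_const_nhds.add
          (tendsto_const_nhds.mul (Real.continuous_sqrt.tendsto 0))).pow 2).div_const _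
    have h0 : (0:ℝ) * Real.log c0 - (M + σ * Real.sqrt 0) ^ 2 / (2 * σ ^ 2)
        = -(M ^ 2 / (2 * σ ^ 2)) := by simp
    rw [h0] at h1
    exact h1.mono_left nhdsWithin_le_nhds
  -- key bounds for each ε > 0
  have key : ∀ ε : ℝ, 0 < ε →
      l ε ≤ ε * Real.log ((gaussianReal 0 (Real.toNNReal (ε * σ ^ 2)) (Set.Ici M)).toReal)
      ∧ ε * Real.log ((gaussianReal 0 (Real.toNNReal (ε * σ ^ 2)) (Set.Ici M)).toReal)
        ≤ -(M ^ 2 / (2 * σ ^ 2)) := by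
    intro ε hε
    set v : NNReal := Real.toNNReal (ε * σ ^ 2) with hvdef
    have hvε : (v : ℝ) = ε * σ ^ 2 := Real.coe_toNNReal _ (by positivity)
    have hvpos : (0:ℝ) < (v : ℝ) := by rw [hvε]; positivity
    have hv : v ≠ 0 := by
      intro h; rw [h] at hvpos; simp at hvpos
    have hse : (0:ℝ) < Real.sqrt ε := Real.sqrt_pos.mpr hε
    have hsqv : Real.sqrt (v : ℝ) = σ * Real.sqrt ε := by
      rw [hvε, mul_comm, Real.sqrt_mul (by positivity), Real.sqrt_sq hσ.le]
    set T : ℝ := (gaussianReal 0 v (Set.Ici M)).toReal with hT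
    have hTeq : T = ∫ x in Set.Ici M, gaussianPDFReal 0 v x := by
      rw [hT, gaussianReal_apply_eq_integral 0 hv, ENNReal.toReal_ofReal]
      exact setIntegral_nonneg measurableSet_Ici fun x _ => gaussianPDFReal_nonneg 0 v x
    -- lower bound L ≤ T
    set L : ℝ := c0 * Real.exp (-(M + σ * Real.sqrt ε) ^ 2 / (2 * (ε * σ ^ 2))) with hL
    have hLpos : 0 < L := by positivity
    have hlower : L ≤ T := by
      set b : ℝ := M + σ * Real.sqrt ε with hb
      have hc : ∀ x ∈ Set.Icc M b, gaussianPDFReal 0 v b ≤ gaussianPDFReal 0 v x := by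
        intro x hx
        have hx0 : 0 ≤ x := le_trans hM.le hx.1
        have hxb : x ^ 2 ≤ b ^ 2 := by nlinarith [hx.1, hx.2]
        unfold gaussianPDFReal
        apply mul_le_mul_of_nonneg_left _ (by positivity)
        apply Real.exp_le_exp.mpr
        rw [div_le_div_iff₀ (by positivity) (by positivity)]
        nlinarith [hxb, hvpos]
      have hμIcc : volume (Set.Icc M b) ≠ ⊤ := measure_Icc_lt_top.ne
      have h1 : gaussianPDFReal 0 v b * (volume (Set.Icc M b)).toReal
          ≤ ∫ x in Set.Icc M b, gaussianPDFReal 0 v x :=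
        setIntegral_ge_of_const_le_real measurableSet_Icc hμIcc hc
          (integrable_gaussianPDFReal 0 v).integrableOn
      have h2 : ∫ x in Set.Icc M b, gaussianPDFReal 0 v x
          ≤ ∫ x in Set.Ici M, gaussianPDFReal 0 v x := by
        refine setIntegral_mono_set (integrable_gaussianPDFReal 0 v).integrableOn
          (ae_of_all _ fun x => gaussianPDFReal_nonneg 0 v x) ?_
        exact HasSubset.Subset.eventuallyLE fun x hx => hx.1
      have hvol : (volume (Set.Icc M b)).toReal = σ * Real.sqrt ε := by
        rw [Real.volume_Icc, ENNReal.toReal_ofReal (by rw [hb]; linarith [mul_pos hσ hse])]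
        rw [hb]; ring
      have hne : σ * Real.sqrt ε ≠ 0 := by positivity
      have hLeq : L = gaussianPDFReal 0 v b * (volume (Set.Icc M b)).toReal := by
        rw [hvol]
        have hpdf : gaussianPDFReal 0 v b = (Real.sqrt (2 * Real.pi))⁻¹ * (σ * Real.sqrt ε)⁻¹
            * Real.exp (-b ^ 2 / (2 * (v:ℝ))) := by
          unfold gaussianPDFReal
          rw [Real.sqrt_mul (by positivity) ((v:ℝ)), hsqv, mul_inv, sub_zero]
        rw [hpdf, hL, hvε, hc0]
        field_simp
      rw [hTeq, hLeq]
      exact le_trans h1 h2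
    -- upper bound T ≤ exp(-M²/(2εσ²))
    have hupper : T ≤ Real.exp (-M ^ 2 / (2 * (ε * σ ^ 2))) := by
      have hpt : ∀ x ∈ Set.Ici M, gaussianPDFReal 0 v x
          ≤ Real.exp (-M ^ 2 / (2 * (v:ℝ))) * gaussianPDFReal M v x := by
        intro x hx
        have harith : -(x - 0) ^ 2 / (2 * (v:ℝ))
            ≤ -M ^ 2 / (2 * (v:ℝ)) + -(x - M) ^ 2 / (2 * (v:ℝ)) := by
          have hx' : M ≤ x := Set.mem_Ici.mp hx
          rw [← add_div, div_le_div_iff₀ (by positivity) (by positivity)]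
          nlinarith [mul_nonneg (mul_nonneg hM.le (sub_nonneg.mpr hx')) hvpos.le]
        calc gaussianPDFReal 0 v x
            = (Real.sqrt (2 * Real.pi * (v:ℝ)))⁻¹ * Real.exp (-(x - 0) ^ 2 / (2 * (v:ℝ))) := rfl
          _ ≤ (Real.sqrt (2 * Real.pi * (v:ℝ)))⁻¹ * (Real.exp (-M ^ 2 / (2 * (v:ℝ)))
              * Real.exp (-(x - M) ^ 2 / (2 * (v:ℝ)))) := by
              rw [← Real.exp_add]
              exact mul_le_mul_of_nonneg_left (Real.exp_le_exp.mpr harith) (by positivity)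
          _ = Real.exp (-M ^ 2 / (2 * (v:ℝ))) * gaussianPDFReal M v x := by
              unfold gaussianPDFReal; ring
      have h1 : ∫ x in Set.Ici M, gaussianPDFReal 0 v x
          ≤ ∫ x in Set.Ici M, Real.exp (-M ^ 2 / (2 * (v:ℝ))) * gaussianPDFReal M v x :=
        setIntegral_mono_on (integrable_gaussianPDFReal 0 v).integrableOn
          (((integrable_gaussianPDFReal M v).const_mul _).integrableOn) measurableSet_Ici hpt
      have h2 : ∫ x in Set.Ici M, Real.exp (-M ^ 2 / (2 * (v:ℝ))) * gaussianPDFReal M v x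
          = Real.exp (-M ^ 2 / (2 * (v:ℝ))) * ∫ x in Set.Ici M, gaussianPDFReal M v x :=
        integral_const_mul _ _
      have h3 : ∫ x in Set.Ici M, gaussianPDFReal M v x ≤ 1 := by
        rw [← integral_gaussianPDFReal_eq_one M hv]
        exact setIntegral_le_integral (integrable_gaussianPDFReal M v)
          (ae_of_all _ fun x => gaussianPDFReal_nonneg M v x)
      calc T ≤ Real.exp (-M ^ 2 / (2 * (v:ℝ))) * ∫ x in Set.Ici M, gaussianPDFReal M v x := by
              rw [hTeq]; rw [h2] at h1; exact h1
        _ ≤ Real.exp (-M ^ 2 / (2 * (v:ℝ))) * 1 :=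
              mul_le_mul_of_nonneg_left h3 (Real.exp_pos _).le
        _ = Real.exp (-M ^ 2 / (2 * (ε * σ ^ 2))) := by rw [mul_one, hvε]
    have hTpos : 0 < T := lt_of_lt_of_le hLpos hlower
    constructor
    · -- l ε ≤ ε log T
      have hlog : Real.log L ≤ Real.log T := Real.log_le_log hLpos hlower
      have := mul_le_mul_of_nonneg_left hlog hε.le
      refine le_trans (le_of_eq ?_) this
      rw [hL, Real.log_mul hc0pos.ne' (Real.exp_ne_zero _), Real.log_exp, hl]
      simp only
      field_simp
      ring
    · -- ε log T ≤ -(M²/(2σ²))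
      have hlog : Real.log T ≤ -M ^ 2 / (2 * (ε * σ ^ 2)) := by
        calc Real.log T ≤ Real.log (Real.exp (-M ^ 2 / (2 * (ε * σ ^ 2)))) :=
              Real.log_le_log hTpos hupper
          _ = -M ^ 2 / (2 * (ε * σ ^ 2)) := Real.log_exp _
      have := mul_le_mul_of_nonneg_left hlog hε.le
      refine le_trans this (le_of_eq ?_)
      field_simp
  -- squeeze
  refine tendsto_of_tendsto_of_tendsto_of_le_of_le' hlim tendsto_const_nhds ?_ ?_
  · filter_upwards [self_mem_nhdsWithin] with ε hε
    exact (key ε hε).1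
  · filter_upwards [self_mem_nhdsWithin] with ε hε
    exact (key ε hε).2
end

section
/- Dawson–Gärtner theorem (for sequences): let (Y_j)_{j∈ℕ} be Polish spaces and, for i ≤ j, let π_{ij} : Y_j → Y_i be continuous maps such that π_{jj} is the identity on Y_j and π_{ik} = π_{ij} ∘ π_{jk} whenever i ≤ j ≤ k. Let X := { (y_j)_{j∈ℕ} ∈ Π_j Y_j : y_i = π_{ij}(y_j) for all i ≤ j } be the projective limit, endowed with the topology induced from the product topology on Π_j Y_j, and let π_j : X → Y_j be the j-th coordinate projection. Let (μ_ε)_{ε>0} be a family of Borel probability measures on X such that for every j ∈ ℕ the pushforward family ((π_j)_*μ_ε)_{ε>0} on Y_j satisfies the large deviation principle with good rate function I_j : Y_j → [0,∞]. Then (μ_ε)_{ε>0} satisfies the large deviation principle on X with good rate function I((y_j)_{j∈ℕ}) := sup_{j∈ℕ} I_j(y_j). -/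
open MeasureTheory Filter Set Topology

/-- Large deviation lower bound for open sets. -/
def LDPLowerBound {X : Type*} [TopologicalSpace X] [MeasurableSpace X]
    (μ : ℝ → Measure X) (I : X → EReal) : Prop :=
  ∀ O : Set X, IsOpen O →
    (-⨅ x ∈ O, I x) ≤
      Filter.liminf (fun ε : ℝ => (ε : EReal) * ENNReal.log (μ ε O)) (𝓝[>] (0 : ℝ))

/-- Large deviation upper bound for closed sets. -/
def LDPUpperBound {X : Type*} [TopologicalSpace X] [MeasurableSpace X]
    (μ : ℝ → Measure X) (I : X → EReal) : Prop :=
  ∀ F : Set X, IsClosed F →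
    Filter.limsup (fun ε : ℝ => (ε : EReal) * ENNReal.log (μ ε F)) (𝓝[>] (0 : ℝ)) ≤
      -⨅ x ∈ F, I x

lemma DG_neg_iInf {ι : Sort*} (f : ι → EReal) : -⨅ i, f i = ⨆ i, -f i := by
  refine le_antisymm ?_ (iSup_le fun i => EReal.neg_le_neg_iff.mpr (iInf_le _ i))
  rw [EReal.neg_le]
  exact le_iInf fun i => EReal.neg_le.mpr (le_iSup (fun i => -f i) i)

lemma DG_neg_iSup {ι : Sort*} (f : ι → EReal) : -⨆ i, f i = ⨅ i, -f i := by
  refine le_antisymm (le_iInf fun i => EReal.neg_le_neg_iff.mpr (le_iSup _ i)) ?_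
  exact EReal.le_neg_of_le_neg
    (iSup_le fun i => EReal.le_neg_of_le_neg (iInf_le (fun i => -f i) i))

lemma DG_neg_iInf₂ {α : Type*} (s : Set α) (f : α → EReal) :
    -⨅ x ∈ s, f x = ⨆ x ∈ s, -f x := by
  simp_rw [DG_neg_iInf]

/-- **Dawson–Gärtner theorem** (for projective systems indexed by `ℕ`).
Let `(Y_j)` be Polish spaces with continuous maps `π_{ij} : Y_j → Y_i` for `i ≤ j`
such that `π_{jj} = id` and `π_{ik} = π_{ij} ∘ π_{jk}` for `i ≤ j ≤ k`.
Let `X` be the projective limit, a subspace of `Π_j Y_j` with the product topology, and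
`π_j : X → Y_j` the coordinate projections. If `(μ_ε)_{ε>0}` are Borel probability
measures on `X` such that for each `j` the pushforwards `((π_j)_*μ_ε)_{ε>0}` satisfy the
LDP with good rate function `I_j`, then `(μ_ε)_{ε>0}` satisfies the LDP on `X` with good
rate function `I(y) = sup_j I_j(y_j)`. -/
theorem dawson_gartner
    (Y : ℕ → Type*) [∀ j, TopologicalSpace (Y j)] [∀ j, PolishSpace (Y j)]
    [∀ j, MeasurableSpace (Y j)] [∀ j, BorelSpace (Y j)]
    (π : ∀ i j : ℕ, i ≤ j → Y j → Y i)
    (hπcont : ∀ (i j : ℕ) (h : i ≤ j), Continuous (π i j h))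
    (hπid : ∀ (j : ℕ) (y : Y j), π j j le_rfl y = y)
    (hπcomp : ∀ (i j k : ℕ) (hij : i ≤ j) (hjk : j ≤ k) (y : Y k),
      π i k (hij.trans hjk) y = π i j hij (π j k hjk y))
    (X : Set (∀ j, Y j))
    (hX : X = {y : ∀ j, Y j | ∀ (i j : ℕ) (h : i ≤ j), y i = π i j h (y j)})
    [MeasurableSpace X] [BorelSpace X]
    (μ : ℝ → Measure X) (hprob : ∀ ε : ℝ, 0 < ε → IsProbabilityMeasure (μ ε))
    (I : ∀ j, Y j → EReal) (hInonneg : ∀ j y, 0 ≤ I j y)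
    (hIlsc : ∀ j, LowerSemicontinuous (I j))
    (hIgood : ∀ (j : ℕ) (c : ℝ), 0 ≤ c → IsCompact {y : Y j | I j y ≤ (c : EReal)})
    (hlower : ∀ j, LDPLowerBound
      (fun ε => Measure.map (fun x : X => (x : ∀ j, Y j) j) (μ ε)) (I j))
    (hupper : ∀ j, LDPUpperBound
      (fun ε => Measure.map (fun x : X => (x : ∀ j, Y j) j) (μ ε)) (I j)) :
    LowerSemicontinuous (fun x : X => ⨆ j, I j ((x : ∀ j, Y j) j)) ∧
    (∀ c : ℝ, 0 ≤ c →
      IsCompact {x : X | (⨆ j, I j ((x : ∀ j, Y j) j)) ≤ (c : EReal)}) ∧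
    LDPLowerBound μ (fun x : X => ⨆ j, I j ((x : ∀ j, Y j) j)) ∧
    LDPUpperBound μ (fun x : X => ⨆ j, I j ((x : ∀ j, Y j) j)) := by
  classical
  -- basic facts
  have hmem : ∀ (x : X) (i j : ℕ) (h : i ≤ j),
      (x : ∀ k, Y k) i = π i j h ((x : ∀ k, Y k) j) := by
    rintro ⟨v, hv⟩ i j h
    rw [hX] at hv
    exact hv i j h
  have hpcont : ∀ j, Continuous fun x : X => (x : ∀ k, Y k) j :=
    fun j => (continuous_apply j).comp continuous_subtype_val
  have hpmeas : ∀ j, Measurable fun x : X => (x : ∀ k, Y k) j :=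
    fun j => (hpcont j).measurable
  have hπmeas : ∀ (i j : ℕ) (h : i ≤ j), Measurable (π i j h) :=
    fun i j h => (hπcont i j h).measurable
  have hXclosed : IsClosed X := by
    rw [hX]
    have : {y : ∀ j, Y j | ∀ (i j : ℕ) (h : i ≤ j), y i = π i j h (y j)} =
        ⋂ (i : ℕ) (j : ℕ) (h : i ≤ j), {y : ∀ k, Y k | y i = π i j h (y j)} := by
      ext y; simp only [mem_setOf_eq, mem_iInter]
    rw [this]
    exact isClosed_iInter fun i => isClosed_iInter fun j => isClosed_iInter fun h =>
      isClosed_eq (continuous_apply i) ((hπcont i j h).comp (continuous_apply j))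
  -- neighborhood basis given by cylinder sets
  have hbasis : ∀ O : Set X, IsOpen O → ∀ x : X, x ∈ O →
      ∃ (j : ℕ) (U : Set (Y j)), IsOpen U ∧ (x : ∀ k, Y k) j ∈ U ∧
        ∀ z : X, (z : ∀ k, Y k) j ∈ U → z ∈ O := by
    intro O hO x hx
    obtain ⟨O', hO', rfl⟩ := isOpen_induced_iff.mp hO
    obtain ⟨Is, u, hu, hsub⟩ := isOpen_pi_iff.mp hO' (x : ∀ k, Y k) hx
    set j := Is.sup id with hj
    have hle : ∀ i ∈ Is, i ≤ j := fun i hi => Finset.le_sup (f := id) hi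
    refine ⟨j, ⋂ i : {i // i ∈ Is}, π i.1 j (hle i.1 i.2) ⁻¹' u i.1, ?_, ?_, ?_⟩
    · exact isOpen_iInter_of_finite fun i =>
        (hu i.1 i.2).1.preimage (hπcont i.1 j (hle i.1 i.2))
    · refine mem_iInter.mpr fun i => ?_
      rw [mem_preimage, ← hmem x i.1 j (hle i.1 i.2)]
      exact (hu i.1 i.2).2
    · intro z hz
      refine hsub ?_
      intro i hi
      have hzi := mem_iInter.mp hz ⟨i, hi⟩
      rw [mem_preimage] at hzi
      rw [hmem z i j (hle i hi)]
      exact hzi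
  -- compatibility of pushforwards
  have hmap : ∀ (i j : ℕ) (h : i ≤ j) (ε : ℝ),
      Measure.map (fun x : X => (x : ∀ k, Y k) i) (μ ε) =
        Measure.map (π i j h) (Measure.map (fun x : X => (x : ∀ k, Y k) j) (μ ε)) := by
    intro i j h ε
    rw [Measure.map_map (hπmeas i j h) (hpmeas j)]
    have : (π i j h ∘ fun x : X => (x : ∀ k, Y k) j) = fun x : X => (x : ∀ k, Y k) i :=
      funext fun x => (hmem x i j h).symm
    rw [this]
  -- monotonicity of the LDP quantities
  have key : ∀ f g : ℝ → ENNReal, (∀ ε : ℝ, 0 < ε → f ε ≤ g ε) →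
      ∀ᶠ (ε : ℝ) in 𝓝[>] (0 : ℝ),
        (ε : EReal) * ENNReal.log (f ε) ≤ (ε : EReal) * ENNReal.log (g ε) := by
    intro f g hfg
    filter_upwards [eventually_mem_nhdsWithin] with ε hε
    have hε' : (0 : ℝ) < ε := hε
    exact mul_le_mul_of_nonneg_left (ENNReal.log_monotone (hfg ε hε'))
      (by exact_mod_cast hε'.le)
  -- compatibility of rate functions
  have hcompat : ∀ (i j : ℕ) (hij : i ≤ j) (y : Y j), I i (π i j hij y) ≤ I j y := by
    intro i j hij y
    by_contra hlt
    push_neg at hlt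
    obtain ⟨a, ha1, ha2⟩ := exists_between hlt
    have hev : ∀ᶠ w in 𝓝 (π i j hij y), a < I i w := hIlsc i (π i j hij y) a ha2
    haveI : RegularSpace (Y i) := by
      letI := TopologicalSpace.upgradeIsCompletelyMetrizable (Y i); infer_instance
    obtain ⟨C, ⟨hCmem, hCclosed⟩, hCsub⟩ := (closed_nhds_basis (π i j hij y)).eventually_iff.mp hev
    set V := interior C with hV
    have hVopen : IsOpen V := isOpen_interior
    have hzV : π i j hij y ∈ V := mem_interior_iff_mem_nhds.mpr hCmem
    have hVC : V ⊆ C := interior_subset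
    -- lower bound for the preimage of V
    have h1 : (-(I j y) : EReal) ≤
        liminf (fun ε : ℝ => (ε : EReal) * ENNReal.log
          ((Measure.map (fun x : X => (x : ∀ k, Y k) j) (μ ε)) (π i j hij ⁻¹' V)))
          (𝓝[>] (0 : ℝ)) := by
      refine le_trans ?_ (hlower j _ (hVopen.preimage (hπcont i j hij)))
      exact EReal.neg_le_neg_iff.mpr (iInf₂_le y hzV)
    have h2 : (fun ε : ℝ => (ε : EReal) * ENNReal.log
          ((Measure.map (fun x : X => (x : ∀ k, Y k) j) (μ ε)) (π i j hij ⁻¹' V))) =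
        fun ε : ℝ => (ε : EReal) * ENNReal.log
          ((Measure.map (fun x : X => (x : ∀ k, Y k) i) (μ ε)) V) := by
      funext ε
      rw [hmap i j hij ε, Measure.map_apply (hπmeas i j hij) hVopen.measurableSet]
    rw [h2] at h1
    have h3 : liminf (fun ε : ℝ => (ε : EReal) * ENNReal.log
          ((Measure.map (fun x : X => (x : ∀ k, Y k) i) (μ ε)) V)) (𝓝[>] (0 : ℝ)) ≤
        limsup (fun ε : ℝ => (ε : EReal) * ENNReal.log
          ((Measure.map (fun x : X => (x : ∀ k, Y k) i) (μ ε)) C)) (𝓝[>] (0 : ℝ)) :=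
      le_trans (liminf_le_liminf (key _ _ fun ε _ => measure_mono hVC)) liminf_le_limsup
    have h4 := hupper i C hCclosed
    have h5 : (-(I j y) : EReal) ≤ -⨅ w ∈ C, I i w := le_trans h1 (le_trans h3 h4)
    have h6 : a ≤ ⨅ w ∈ C, I i w := le_iInf₂ fun w hw => (hCsub hw).le
    exact absurd (le_trans h6 (EReal.neg_le_neg_iff.mp h5)) (not_le.mpr ha1)
  -- Part 1: lower semicontinuity
  have part1 : LowerSemicontinuous (fun x : X => ⨆ j, I j ((x : ∀ j, Y j) j)) :=
    lowerSemicontinuous_iSup fun j => (hIlsc j).comp (hpcont j)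
  -- Part 2: goodness
  have part2 : ∀ c : ℝ, 0 ≤ c →
      IsCompact {x : X | (⨆ j, I j ((x : ∀ j, Y j) j)) ≤ (c : EReal)} := by
    intro c hc
    rw [Topology.IsEmbedding.subtypeVal.isCompact_iff]
    have himg : Subtype.val '' {x : X | (⨆ j, I j ((x : ∀ j, Y j) j)) ≤ (c : EReal)} =
        X ∩ univ.pi (fun j => {y : Y j | I j y ≤ (c : EReal)}) := by
      ext y
      constructor
      · rintro ⟨⟨y', hyX⟩, hy, rfl⟩
        refine ⟨hyX, fun j _ => ?_⟩
        have h1 : I j (y' j) ≤ ⨆ k, I k (y' k) := le_iSup (fun k => I k (y' k)) j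
        exact le_trans h1 hy
      · rintro ⟨hyX, hy⟩
        refine ⟨⟨y, hyX⟩, ?_, rfl⟩
        show (⨆ j, I j (((⟨y, hyX⟩ : X) : ∀ k, Y k) j)) ≤ (c : EReal)
        exact iSup_le fun j => hy j (mem_univ j)
    rw [himg]
    exact (isCompact_univ_pi fun j => hIgood j c hc).inter_left hXclosed
  -- Part 3: lower bound
  have part3 : LDPLowerBound μ (fun x : X => ⨆ j, I j ((x : ∀ j, Y j) j)) := by
    intro O hO
    rw [DG_neg_iInf₂]
    refine iSup₂_le fun x hx => ?_
    obtain ⟨j, U, hUopen, hxU, hUsub⟩ := hbasis O hO x hx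
    have h1 := hlower j U hUopen
    have h2 : (-(⨆ k, I k ((x : ∀ j, Y j) k)) : EReal) ≤ -⨅ y ∈ U, I j y :=
      EReal.neg_le_neg_iff.mpr (le_trans (iInf₂_le _ hxU)
        (le_iSup (fun k => I k ((x : ∀ l, Y l) k)) j))
    refine le_trans h2 (le_trans h1 ?_)
    refine liminf_le_liminf (key _ _ fun ε hε => ?_)
    rw [Measure.map_apply (hpmeas j) hUopen.measurableSet]
    exact measure_mono fun z hz => hUsub z hz
  -- Part 4: upper bound
  have part4 : LDPUpperBound μ (fun x : X => ⨆ j, I j ((x : ∀ j, Y j) j)) := by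
    intro F hF
    set Fc : ∀ j, Set (Y j) := fun j =>
      closure ((fun x : X => (x : ∀ k, Y k) j) '' F) with hFc
    have hFcclosed : ∀ j, IsClosed (Fc j) := fun j => isClosed_closure
    set R : EReal := ⨆ j, ⨅ y ∈ Fc j, I j y with hR
    have hLR : limsup (fun ε : ℝ => (ε : EReal) * ENNReal.log (μ ε F)) (𝓝[>] (0 : ℝ)) ≤
        -R := by
      rw [hR, DG_neg_iSup]
      refine le_iInf fun j => ?_
      refine le_trans ?_ (hupper j (Fc j) (hFcclosed j))
      refine limsup_le_limsup (key _ _ fun ε hε => ?_)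
      rw [Measure.map_apply (hpmeas j) (hFcclosed j).measurableSet]
      exact measure_mono fun x hxF => subset_closure (mem_image_of_mem _ hxF)
    refine le_trans hLR (EReal.neg_le_neg_iff.mpr ?_)
    -- key inequality : ⨅ x ∈ F, ⨆ j, I j (x j) ≤ R
    by_contra hcon
    push_neg at hcon
    have hR0 : (0 : EReal) ≤ R := by
      rw [hR]
      exact le_trans (le_iInf₂ fun y _ => hInonneg 0 y)
        (le_iSup (fun j => ⨅ y ∈ Fc j, I j y) 0)
    obtain ⟨c, hRc, hcI⟩ := EReal.exists_between_coe_real hcon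
    rw [hR] at hRc
    have hc0 : (0 : ℝ) ≤ c := by
      have : (0 : EReal) < (c : EReal) := lt_of_le_of_lt hR0 hRc
      exact_mod_cast this.le
    set A : ∀ j, Set (Y j) := fun j => Fc j ∩ {y : Y j | I j y ≤ (c : EReal)} with hA
    have hAne : ∀ j, (A j).Nonempty := by
      intro j
      have h1 : ⨅ y ∈ Fc j, I j y < (c : EReal) :=
        lt_of_le_of_lt (le_iSup (fun j => ⨅ y ∈ Fc j, I j y) j) hRc
      rw [iInf_lt_iff] at h1
      obtain ⟨y, hy⟩ := h1
      rw [iInf_lt_iff] at hy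
      obtain ⟨hyF, hyc⟩ := hy
      exact ⟨y, hyF, hyc.le⟩
    have hAcomp : ∀ j, IsCompact (A j) := fun j =>
      (hIgood j c hc0).inter_left (hFcclosed j)
    have hAclosed : ∀ j, IsClosed (A j) := fun j =>
      (hFcclosed j).inter ((hIlsc j).isClosed_preimage (c : EReal))
    have hAmap : ∀ (i j : ℕ) (hij : i ≤ j), ∀ y ∈ A j, π i j hij y ∈ A i := by
      rintro i j hij y ⟨hy1, hy2⟩
      refine ⟨?_, le_trans (hcompat i j hij y) hy2⟩
      have himcl : π i j hij '' closure ((fun x : X => (x : ∀ k, Y k) j) '' F) ⊆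
          closure (π i j hij '' ((fun x : X => (x : ∀ k, Y k) j) '' F)) :=
        image_closure_subset_closure_image (hπcont i j hij)
      have himg : π i j hij '' ((fun x : X => (x : ∀ k, Y k) j) '' F) ⊆
          (fun x : X => (x : ∀ k, Y k) i) '' F := by
        rintro _ ⟨_, ⟨x, hxF, rfl⟩, rfl⟩
        exact ⟨x, hxF, hmem x i j hij⟩
      exact (himcl.trans (closure_mono himg)) (mem_image_of_mem _ hy1)
    set Cs : ℕ → Set (∀ j, Y j) := fun n => (univ.pi A) ∩
      {y : ∀ j, Y j | ∀ (i j : ℕ) (hij : i ≤ j), j ≤ n → y i = π i j hij (y j)} with hCs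
    have hCanti : ∀ n, Cs (n + 1) ⊆ Cs n := fun n y hy =>
      ⟨hy.1, fun i j hij hjn => hy.2 i j hij (hjn.trans (Nat.le_succ n))⟩
    have hCclosed : ∀ n, IsClosed (Cs n) := by
      intro n
      refine (isClosed_set_pi fun j _ => hAclosed j).inter ?_
      have heq : {y : ∀ j, Y j | ∀ (i j : ℕ) (hij : i ≤ j), j ≤ n → y i = π i j hij (y j)} =
          ⋂ (i : ℕ) (j : ℕ) (hij : i ≤ j) (_ : j ≤ n),
            {y : ∀ k, Y k | y i = π i j hij (y j)} := by
        ext y; simp only [mem_setOf_eq, mem_iInter]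
      rw [heq]
      exact isClosed_iInter fun i => isClosed_iInter fun j => isClosed_iInter fun hij =>
        isClosed_iInter fun _ =>
          isClosed_eq (continuous_apply i) ((hπcont i j hij).comp (continuous_apply j))
    have hCne : ∀ n, (Cs n).Nonempty := by
      intro n
      obtain ⟨a, ha⟩ := hAne n
      refine ⟨fun j => if hjn : j ≤ n then π j n hjn a else (hAne j).some, ?_, ?_⟩
      · intro j _
        by_cases hjn : j ≤ n
        · simp only [dif_pos hjn]
          exact hAmap j n hjn a ha
        · simp only [dif_neg hjn]
          exact (hAne j).some_mem
      · intro i j hij hjn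
        have hin : i ≤ n := hij.trans hjn
        simp only [dif_pos hjn, dif_pos hin]
        exact hπcomp i j n hij hjn a
    have hC0comp : IsCompact (Cs 0) :=
      (isCompact_univ_pi fun j => hAcomp j).of_isClosed_subset (hCclosed 0) inter_subset_left
    obtain ⟨x, hx⟩ := IsCompact.nonempty_iInter_of_sequence_nonempty_isCompact_isClosed
      Cs hCanti hCne hC0comp hCclosed
    simp only [mem_iInter] at hx
    have hxX : x ∈ X := by
      rw [hX]
      intro i j hij
      exact (hx j).2 i j hij le_rfl
    have hxA : ∀ j, x j ∈ A j := fun j => (hx 0).1 j (mem_univ j)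
    have hx'F : (⟨x, hxX⟩ : X) ∈ F := by
      rw [← hF.closure_eq]
      rw [mem_closure_iff]
      intro O hO hx'O
      obtain ⟨j, U, hUopen, hxU, hUsub⟩ := hbasis O hO ⟨x, hxX⟩ hx'O
      have hclj : x j ∈ closure ((fun x : X => (x : ∀ k, Y k) j) '' F) := (hxA j).1
      rw [mem_closure_iff] at hclj
      obtain ⟨_, hyU, z, hzF, rfl⟩ := hclj U hUopen hxU
      exact ⟨z, hUsub z hyU, hzF⟩
    refine absurd ?_ (not_le.mpr hcI)
    exact le_trans (iInf₂_le (⟨x, hxX⟩ : X) hx'F) (iSup_le fun j => (hxA j).2)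
  exact ⟨part1, part2, part3, part4⟩
end

section
/- Partition formula for the Dirichlet energy: let T > 0 and let f : ℝ → ℝ be measurable with ∫₀^T f(s)² ds < ∞. Define W(t) := ∫₀^t f(s) ds for t ∈ [0,T]. Then the supremum, over all k ∈ ℕ and all partitions 0 = t₀ < t₁ < ⋯ < t_k ≤ T, of Σ_{i=0}^{k−1} (W(t_{i+1}) − W(t_i))²/(2(t_{i+1} − t_i)) equals (1/2)∫₀^T f(s)² ds. -/
open MeasureTheory Filter Set intervalIntegral


private lemma intOn_shift_sq {f : ℝ → ℝ} {a b : ℝ}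
    (h1 : IntegrableOn f (Ioc a b)) (h2 : IntegrableOn (fun x => f x ^ 2) (Ioc a b)) (c : ℝ) :
    IntegrableOn (fun x => (f x - c) ^ 2) (Ioc a b) := by
  have h : (fun x => (f x - c) ^ 2) = fun x => f x ^ 2 - (2*c) * f x + c ^ 2 := by
    funext x; ring
  rw [h]
  exact (h2.sub (h1.const_mul _)).add (integrableOn_const measure_Ioc_lt_top.ne)

private lemma expand_sq {f : ℝ → ℝ} {a b : ℝ} (hab : a ≤ b)
    (h1 : IntegrableOn f (Ioc a b)) (h2 : IntegrableOn (fun s => f s ^ 2) (Ioc a b)) (c : ℝ) :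
    ∫ s in Ioc a b, (f s - c) ^ 2 =
      (∫ s in Ioc a b, f s ^ 2) - 2 * c * (∫ s in Ioc a b, f s) + c ^ 2 * (b - a) := by
  have h : ∀ s, (f s - c) ^ 2 = f s ^ 2 - (2*c) * f s + c ^ 2 := fun s => by ring
  rw [show (fun s => (f s - c)^2) = fun s => f s ^ 2 - (2*c) * f s + c ^ 2 from funext h]
  have hsub : IntegrableOn (fun s => f s ^ 2 - (2*c) * f s) (Ioc a b) := h2.sub (h1.const_mul _)
  have hcst : IntegrableOn (fun _ : ℝ => c ^ 2) (Ioc a b) := integrableOn_const measure_Ioc_lt_top.ne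
  rw [integral_add hsub hcst, integral_sub h2 (h1.const_mul _), MeasureTheory.integral_const_mul,
    setIntegral_const]
  simp [Real.volume_Ioc, ENNReal.toReal_ofReal (by linarith : (0:ℝ) ≤ b - a), smul_eq_mul]
  rw [max_eq_left (by linarith)]
  ring

private lemma key_upper {f : ℝ → ℝ} {a b : ℝ} (hab : a < b)
    (h1 : IntegrableOn f (Ioc a b)) (h2 : IntegrableOn (fun s => f s ^ 2) (Ioc a b)) :
    (∫ s in Ioc a b, f s) ^ 2 / (2 * (b - a)) ≤ (1/2) * ∫ s in Ioc a b, f s ^ 2 := by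
  have hm : 0 < b - a := by linarith
  set A := ∫ s in Ioc a b, f s with hA
  have h0 : 0 ≤ ∫ s in Ioc a b, (f s - A / (b-a)) ^ 2 :=
    setIntegral_nonneg measurableSet_Ioc (fun x _ => sq_nonneg _)
  rw [expand_sq hab.le h1 h2 (A / (b-a))] at h0
  have hc : A / (b - a) * (b - a) = A := div_mul_cancel₀ _ (by linarith)
  rw [div_le_iff₀ (by linarith : (0:ℝ) < 2 * (b - a))]
  nlinarith [h0, hc, sq_nonneg (A / (b-a))]

private lemma key_lower {f : ℝ → ℝ} {a b : ℝ} (hab : a < b)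
    (h1 : IntegrableOn f (Ioc a b)) (h2 : IntegrableOn (fun s => f s ^ 2) (Ioc a b)) (c : ℝ) :
    (1/2) * (∫ s in Ioc a b, f s ^ 2) - (1/2) * (∫ s in Ioc a b, (f s - c) ^ 2)
      ≤ (∫ s in Ioc a b, f s) ^ 2 / (2 * (b - a)) := by
  have hm : 0 < b - a := by linarith
  rw [expand_sq hab.le h1 h2 c, le_div_iff₀ (by linarith : (0:ℝ) < 2 * (b - a))]
  nlinarith [sq_nonneg ((∫ s in Ioc a b, f s) - c * (b - a))]

private lemma exists_partition_ge (T : ℝ) (hT : 0 < T) (f : ℝ → ℝ) (hf : Measurable f)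
    (hf2 : IntegrableOn (fun s => f s ^ 2) (Set.Icc 0 T)) {ε : ℝ} (hε : 0 < ε) :
    ∃ (k : ℕ) (t : Fin (k+1) → ℝ), StrictMono t ∧ t 0 = 0 ∧ t (Fin.last k) ≤ T ∧
      (1/2) * (∫ s in (0:ℝ)..T, f s ^ 2) - ε ≤
        ∑ i : Fin k, ((∫ s in (0:ℝ)..(t i.succ), f s) - ∫ s in (0:ℝ)..(t i.castSucc), f s) ^ 2 /
          (2 * (t i.succ - t i.castSucc)) := by
  have hf2' : IntegrableOn (fun s => f s ^ 2) (Ioc 0 T) := hf2.mono_set Ioc_subset_Icc_self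
  haveI : IsFiniteMeasure (volume.restrict (Icc (0:ℝ) T)) := ⟨by
    rw [Measure.restrict_apply_univ]; exact measure_Icc_lt_top⟩
  have hfmem : MemLp f 2 (volume.restrict (Icc 0 T)) :=
    (memLp_two_iff_integrable_sq hf.aestronglyMeasurable).2 hf2
  have hfi : IntegrableOn f (Icc 0 T) := hfmem.integrable one_le_two
  -- approximate the indicator extension by a continuous compactly supported function
  set F : ℝ → ℝ := (Ioc 0 T).indicator f with hFdef
  have hFmeas : Measurable F := hf.indicator measurableSet_Ioc
  have hFsq : (fun x => F x ^ 2) = (Ioc 0 T).indicator (fun s => f s ^ 2) := by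
    funext x; by_cases hx : x ∈ Ioc (0:ℝ) T <;> simp [hFdef, hx]
  have hFsqint : Integrable (fun x => F x ^ 2) := by
    rw [hFsq, integrable_indicator_iff measurableSet_Ioc]; exact hf2'
  have hFmem : MemLp F 2 volume :=
    (memLp_two_iff_integrable_sq hFmeas.aestronglyMeasurable).2 hFsqint
  have hFmem' : MemLp F (ENNReal.ofReal 2) volume := by
    rw [ENNReal.ofReal_ofNat]; exact hFmem
  obtain ⟨g, g_supp, hg_int, g_cont, g_mem'⟩ :=
    hFmem'.exists_hasCompactSupport_integral_rpow_sub_le two_pos (half_pos hε)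
  have g_mem : MemLp g 2 volume := by rwa [ENNReal.ofReal_ofNat] at g_mem'
  have hrpow : ∀ y : ℝ, ‖y‖ ^ (2:ℝ) = y ^ 2 := fun y => by
    rw [show (2:ℝ) = ((2:ℕ):ℝ) by norm_num, Real.rpow_natCast, Real.norm_eq_abs, sq_abs]
  have hFg_int : Integrable (fun x => (F x - g x) ^ 2) volume :=
    (memLp_two_iff_integrable_sq (hFmem.sub g_mem).aestronglyMeasurable).1 (hFmem.sub g_mem)
  have hFg : ∫ x, (F x - g x) ^ 2 ≤ ε / 2 := by
    calc ∫ x, (F x - g x) ^ 2 = ∫ x, ‖F x - g x‖ ^ (2:ℝ) := by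
          congr 1; funext x; rw [hrpow]
      _ ≤ ε / 2 := hg_int
  have hIoc_fg : ∫ x in Ioc (0:ℝ) T, (f x - g x) ^ 2 ≤ ε / 2 := by
    have h1 : ∫ x in Ioc (0:ℝ) T, (f x - g x) ^ 2 = ∫ x in Ioc (0:ℝ) T, (F x - g x) ^ 2 :=
      setIntegral_congr_fun measurableSet_Ioc (fun x hx => by
        simp [hFdef, indicator_of_mem hx])
    rw [h1]
    exact le_trans (setIntegral_le_integral hFg_int
      (Filter.Eventually.of_forall fun x => sq_nonneg _)) hFg
  -- uniform continuity of g
  set ε₂ : ℝ := Real.sqrt (ε / (2 * T)) with hε₂def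
  have hε₂pos : 0 < ε₂ := Real.sqrt_pos.2 (by positivity)
  have hε₂sq : ε₂ ^ 2 = ε / (2 * T) := Real.sq_sqrt (by positivity)
  obtain ⟨δ, hδpos, hδ⟩ := Metric.uniformContinuous_iff.1
    (g_supp.uniformContinuous_of_continuous g_cont) ε₂ hε₂pos
  -- choose the mesh
  obtain ⟨k, hk⟩ := exists_nat_gt (max 1 (T / δ))
  have hk1 : (1:ℝ) ≤ (k:ℝ) := le_of_lt (lt_of_le_of_lt (le_max_left _ _) hk)
  have hk0 : (0:ℝ) < (k:ℝ) := by linarith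
  have hkR : ((k:ℝ)) ≠ 0 := ne_of_gt hk0
  have hmesh : 0 < T / k := div_pos hT hk0
  have hmeshδ : T / k < δ := by
    rw [div_lt_iff₀ hk0]
    have h2 : T / δ < (k:ℝ) := lt_of_le_of_lt (le_max_right 1 (T/δ)) hk
    have := (div_lt_iff₀ hδpos).1 h2
    linarith [this, mul_comm (δ:ℝ) (k:ℝ)]
  -- the uniform partition
  set u : ℕ → ℝ := fun n => n * (T / k) with hu
  have hu0 : u 0 = 0 := by simp [hu]
  have huk : u k = T := by simp only [hu]; field_simp
  have humono : ∀ {m n : ℕ}, m < n → u m < u n := fun {m n} h => by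
    simp only [hu]; exact mul_lt_mul_of_pos_right (by exact_mod_cast h) hmesh
  have hustep : ∀ n : ℕ, u (n+1) - u n = T / k := fun n => by simp only [hu]; push_cast; ring
  have hunn : ∀ n : ℕ, 0 ≤ u n := fun n => by
    simp only [hu]; positivity
  have huT : ∀ n ≤ k, u n ≤ T := by
    intro n hn
    have h1 : (n:ℝ) ≤ (k:ℝ) := by exact_mod_cast hn
    have := mul_le_mul_of_nonneg_right h1 hmesh.le
    simp only [hu]
    calc (n:ℝ) * (T/k) ≤ (k:ℝ) * (T/k) := this
      _ = T := by field_simp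
  have hIsub : ∀ n, n + 1 ≤ k → Ioc (u n) (u (n+1)) ⊆ Icc 0 T := fun n hn =>
    subset_trans (Ioc_subset_Ioc (hunn n) (huT _ hn)) Ioc_subset_Icc_self
  have hIsub' : ∀ n, n + 1 ≤ k → Ioc (u n) (u (n+1)) ⊆ Ioc 0 T := fun n hn =>
    Ioc_subset_Ioc (hunn n) (huT _ hn)
  -- per-interval integrabilities
  have hfint : ∀ n, n + 1 ≤ k → IntegrableOn f (Ioc (u n) (u (n+1))) := fun n hn =>
    hfi.mono_set (hIsub n hn)
  have hf2int : ∀ n, n + 1 ≤ k → IntegrableOn (fun s => f s ^ 2) (Ioc (u n) (u (n+1))) :=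
    fun n hn => hf2.mono_set (hIsub n hn)
  have hfgint : ∀ n, n + 1 ≤ k → IntegrableOn (fun x => (f x - g x) ^ 2) (Ioc (u n) (u (n+1))) := by
    intro n hn
    refine (hFg_int.integrableOn.mono_set (hIsub' n hn)).congr_fun ?_ measurableSet_Ioc
    exact fun x hx => by simp [hFdef, indicator_of_mem (hIsub' n hn hx)]
  -- the W-increments
  have hWint : ∀ n ≤ k, IntervalIntegrable f volume 0 (u n) := fun n hn =>
    (intervalIntegrable_iff_integrableOn_Ioc_of_le (hunn n)).2
      (hfi.mono_set (subset_trans (Ioc_subset_Ioc le_rfl (huT n hn)) Ioc_subset_Icc_self))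
  have hW : ∀ i : Fin k, (∫ s in (0:ℝ)..(u (i.val+1)), f s) - ∫ s in (0:ℝ)..(u i.val), f s
      = ∫ s in Ioc (u i.val) (u (i.val+1)), f s := by
    intro i
    rw [← intervalIntegral.integral_of_le (humono (Nat.lt_succ_self i.val)).le]
    exact intervalIntegral.integral_interval_sub_left (hWint _ i.isLt) (hWint _ (le_of_lt i.isLt))
  -- telescoping sums
  have htel : ∀ (h : ℝ → ℝ), (∀ n, n + 1 ≤ k → IntegrableOn h (Ioc (u n) (u (n+1)))) →
      ∑ i : Fin k, ∫ s in Ioc (u i.val) (u (i.val+1)), h s = ∫ s in Ioc (0:ℝ) T, h s := by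
    intro h hint
    have h1 : ∀ i : Fin k, ∫ s in Ioc (u i.val) (u (i.val+1)), h s
        = ∫ s in (u i.val)..(u (i.val+1)), h s := fun i =>
      (intervalIntegral.integral_of_le (humono (Nat.lt_succ_self i.val)).le).symm
    calc ∑ i : Fin k, ∫ s in Ioc (u i.val) (u (i.val+1)), h s
        = ∑ n ∈ Finset.range k, ∫ s in (u n)..(u (n+1)), h s := by
          rw [← Fin.sum_univ_eq_sum_range (fun n => ∫ s in (u n)..(u (n+1)), h s) k]
          exact Finset.sum_congr rfl fun i _ => h1 i
      _ = ∫ s in (u 0)..(u k), h s := intervalIntegral.sum_integral_adjacent_intervals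
          (fun n hn => (intervalIntegrable_iff_integrableOn_Ioc_of_le
            (humono (Nat.lt_succ_self n)).le).2 (hint n hn))
      _ = ∫ s in Ioc (0:ℝ) T, h s := by
          rw [hu0, huk, intervalIntegral.integral_of_le hT.le]
  have hsum2 : ∑ i : Fin k, ∫ s in Ioc (u i.val) (u (i.val+1)), f s ^ 2
      = ∫ s in (0:ℝ)..T, f s ^ 2 := by
    rw [htel (fun s => f s ^ 2) hf2int, intervalIntegral.integral_of_le hT.le]
  have hsumfg : ∑ i : Fin k, ∫ s in Ioc (u i.val) (u (i.val+1)), (f s - g s) ^ 2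
      = ∫ s in Ioc (0:ℝ) T, (f s - g s) ^ 2 := htel _ hfgint
  -- per-interval comparison with the step value of g
  have hBi : ∀ i : Fin k, ∫ s in Ioc (u i.val) (u (i.val+1)), (f s - g (u i.val)) ^ 2
      ≤ 2 * (∫ s in Ioc (u i.val) (u (i.val+1)), (f s - g s) ^ 2) + 2 * ε₂ ^ 2 * (T / k) := by
    intro i
    have hik : i.val + 1 ≤ k := i.isLt
    have hR : IntegrableOn (fun x => 2 * (f x - g x) ^ 2 + 2 * ε₂ ^ 2)
        (Ioc (u i.val) (u (i.val+1))) :=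
      ((hfgint _ hik).const_mul 2).add (integrableOn_const measure_Ioc_lt_top.ne)
    calc ∫ s in Ioc (u i.val) (u (i.val+1)), (f s - g (u i.val)) ^ 2
        ≤ ∫ s in Ioc (u i.val) (u (i.val+1)), (2 * (f s - g s) ^ 2 + 2 * ε₂ ^ 2) := by
          refine setIntegral_mono_on (intOn_shift_sq (hfint _ hik) (hf2int _ hik) _)
            hR measurableSet_Ioc (fun x hx => ?_)
          have hdist : dist x (u i.val) < δ := by
            rw [Real.dist_eq, abs_of_pos (by linarith [hx.1] : (0:ℝ) < x - u i.val)]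
            have := hx.2
            have := hustep i.val
            linarith
          have hgc := hδ hdist
          rw [Real.dist_eq] at hgc
          have h2 : (g x - g (u i.val)) ^ 2 ≤ ε₂ ^ 2 := by
            rw [← sq_abs]
            exact pow_le_pow_left₀ (abs_nonneg _) hgc.le 2
          nlinarith [sq_nonneg (f x - 2 * g x + g (u i.val))]
      _ = 2 * (∫ s in Ioc (u i.val) (u (i.val+1)), (f s - g s) ^ 2) + 2 * ε₂ ^ 2 * (T / k) := by
          rw [integral_add ((hfgint _ hik).const_mul 2)
            (integrableOn_const measure_Ioc_lt_top.ne),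
            MeasureTheory.integral_const_mul, setIntegral_const]
          simp [Real.volume_Ioc, hustep i.val, ENNReal.toReal_ofReal hmesh.le, smul_eq_mul]
          rw [max_eq_left (by have := hmesh.le; rw [div_eq_mul_inv] at this; exact this)]
          ring
  -- total bound on the error sum
  have hBsum : ∑ i : Fin k, ∫ s in Ioc (u i.val) (u (i.val+1)), (f s - g (u i.val)) ^ 2
      ≤ 2 * ε := by
    calc ∑ i : Fin k, ∫ s in Ioc (u i.val) (u (i.val+1)), (f s - g (u i.val)) ^ 2
        ≤ ∑ i : Fin k, (2 * (∫ s in Ioc (u i.val) (u (i.val+1)), (f s - g s) ^ 2)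
            + 2 * ε₂ ^ 2 * (T / k)) := Finset.sum_le_sum fun i _ => hBi i
      _ = 2 * (∑ i : Fin k, ∫ s in Ioc (u i.val) (u (i.val+1)), (f s - g s) ^ 2)
            + (k:ℝ) * (2 * ε₂ ^ 2 * (T / k)) := by
          rw [Finset.sum_add_distrib, ← Finset.mul_sum, Finset.sum_const, Finset.card_univ,
            Fintype.card_fin, nsmul_eq_mul]
      _ ≤ 2 * (ε / 2) + (k:ℝ) * (2 * ε₂ ^ 2 * (T / k)) := by
          rw [hsumfg]
          have := hIoc_fg
          linarith
      _ = 2 * ε := by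
          rw [hε₂sq]
          field_simp
          ring
  -- assemble
  refine ⟨k, fun i => u i.val, fun i j hij => humono (show i.val < j.val from hij),
    by simp [hu0], le_of_eq (by simpa using huk), ?_⟩
  simp only [Fin.val_succ, Fin.coe_castSucc]
  calc (1/2) * (∫ s in (0:ℝ)..T, f s ^ 2) - ε
      ≤ (1/2) * (∑ i : Fin k, ∫ s in Ioc (u i.val) (u (i.val+1)), f s ^ 2)
        - (1/2) * (∑ i : Fin k, ∫ s in Ioc (u i.val) (u (i.val+1)), (f s - g (u i.val)) ^ 2) := by
        rw [hsum2]
        linarith [hBsum]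
    _ = ∑ i : Fin k, ((1/2) * (∫ s in Ioc (u i.val) (u (i.val+1)), f s ^ 2)
          - (1/2) * (∫ s in Ioc (u i.val) (u (i.val+1)), (f s - g (u i.val)) ^ 2)) := by
        rw [Finset.sum_sub_distrib, Finset.mul_sum, Finset.mul_sum]
    _ ≤ ∑ i : Fin k, ((∫ s in (0:ℝ)..(u (i.val+1)), f s) - ∫ s in (0:ℝ)..(u i.val), f s) ^ 2 /
          (2 * (u (i.val+1) - u i.val)) := by
        refine Finset.sum_le_sum fun i _ => ?_
        rw [hW i]
        exact key_lower (humono (Nat.lt_succ_self i.val)) (hfint _ i.isLt) (hf2int _ i.isLt) _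

/-- **Partition formula for the Dirichlet energy.** Let `T > 0` and let `f : ℝ → ℝ` be
measurable with `∫₀^T f(s)² ds < ∞`. Define `W(t) := ∫₀^t f(s) ds`. Then the supremum,
over all `k ∈ ℕ` and partitions `0 = t₀ < t₁ < ⋯ < t_k ≤ T`, of
`Σ_{i<k} (W(t_{i+1}) − W(t_i))²/(2(t_{i+1} − t_i))` equals `(1/2)·∫₀^T f(s)² ds`. -/
theorem dirichlet_energy_partition_sup (T : ℝ) (hT : 0 < T)
    (f : ℝ → ℝ) (hf : Measurable f)
    (hf2 : IntegrableOn (fun s => f s ^ 2) (Set.Icc 0 T)) :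
    (⨆ (k : ℕ) (t : Fin (k+1) → ℝ) (_ : StrictMono t) (_ : t 0 = 0)
        (_ : t (Fin.last k) ≤ T),
      (((∑ i : Fin k,
          ((∫ s in (0:ℝ)..(t i.succ), f s) - ∫ s in (0:ℝ)..(t i.castSucc), f s) ^ 2 /
            (2 * (t i.succ - t i.castSucc))) : ℝ) : EReal)) =
    (((1 / 2) * ∫ s in (0:ℝ)..T, f s ^ 2 : ℝ) : EReal) := by
  haveI : IsFiniteMeasure (volume.restrict (Icc (0:ℝ) T)) := ⟨by
    rw [Measure.restrict_apply_univ]; exact measure_Icc_lt_top⟩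
  have hfmem : MemLp f 2 (volume.restrict (Icc 0 T)) :=
    (memLp_two_iff_integrable_sq hf.aestronglyMeasurable).2 hf2
  have hfi : IntegrableOn f (Icc 0 T) := hfmem.integrable one_le_two
  haveI : Subsingleton (Fin (0+1)) := Fin.subsingleton_one
  set r : ℝ := (1 / 2) * ∫ s in (0:ℝ)..T, f s ^ 2 with hrdef
  -- every partition sum is at most r
  have hub : ∀ (k : ℕ) (t : Fin (k+1) → ℝ), StrictMono t → t 0 = 0 → t (Fin.last k) ≤ T →
      (∑ i : Fin k, ((∫ s in (0:ℝ)..(t i.succ), f s) - ∫ s in (0:ℝ)..(t i.castSucc), f s) ^ 2 /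
        (2 * (t i.succ - t i.castSucc))) ≤ r := by
    intro k t hmono h0 hlast
    have htnn : ∀ j : Fin (k+1), 0 ≤ t j := fun j => h0 ▸ hmono.monotone (Fin.zero_le j)
    have htT : ∀ j : Fin (k+1), t j ≤ T := fun j => le_trans (hmono.monotone (Fin.le_last j)) hlast
    have hIsub : ∀ i : Fin k, Ioc (t i.castSucc) (t i.succ) ⊆ Icc 0 T := fun i =>
      subset_trans (Ioc_subset_Ioc (htnn _) (htT _)) Ioc_subset_Icc_self
    have hfint : ∀ i : Fin k, IntegrableOn f (Ioc (t i.castSucc) (t i.succ)) := fun i =>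
      hfi.mono_set (hIsub i)
    have hf2int : ∀ i : Fin k, IntegrableOn (fun s => f s ^ 2) (Ioc (t i.castSucc) (t i.succ)) :=
      fun i => hf2.mono_set (hIsub i)
    have hWint : ∀ j : Fin (k+1), IntervalIntegrable f volume 0 (t j) := fun j =>
      (intervalIntegrable_iff_integrableOn_Ioc_of_le (htnn j)).2
        (hfi.mono_set (subset_trans (Ioc_subset_Ioc le_rfl (htT j)) Ioc_subset_Icc_self))
    have hW : ∀ i : Fin k, (∫ s in (0:ℝ)..(t i.succ), f s) - ∫ s in (0:ℝ)..(t i.castSucc), f s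
        = ∫ s in Ioc (t i.castSucc) (t i.succ), f s := by
      intro i
      rw [← intervalIntegral.integral_of_le (hmono (Fin.castSucc_lt_succ : i.castSucc < i.succ)).le]
      exact intervalIntegral.integral_interval_sub_left (hWint _) (hWint _)
    -- telescoping for f^2 with the auxiliary sequence a
    have a_lt : ∀ n : ℕ, min n k < k + 1 := fun n => by omega
    set a : ℕ → ℝ := fun n => t ⟨min n k, a_lt n⟩ with ha
    have hac : ∀ i : Fin k, t i.castSucc = a i.val := fun i => by
      simp only [ha]
      congr 1
      exact Fin.ext (by simp [Fin.coe_castSucc, Nat.min_eq_left (le_of_lt i.isLt)])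
    have has : ∀ i : Fin k, t i.succ = a (i.val + 1) := fun i => by
      simp only [ha]
      congr 1
      exact Fin.ext (by simp [Fin.val_succ, Nat.min_eq_left i.isLt])
    have hamono : ∀ n, a n ≤ a (n+1) := fun n => hmono.monotone (by
      simp only [Fin.mk_le_mk]; omega)
    have haint : ∀ n, n < k → IntervalIntegrable (fun s => f s ^ 2) volume (a n) (a (n+1)) := by
      intro n hn
      refine (intervalIntegrable_iff_integrableOn_Ioc_of_le (hamono n)).2 (hf2.mono_set ?_)
      exact subset_trans (Ioc_subset_Ioc (htnn _) (htT _)) Ioc_subset_Icc_self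
    calc ∑ i : Fin k, ((∫ s in (0:ℝ)..(t i.succ), f s) - ∫ s in (0:ℝ)..(t i.castSucc), f s) ^ 2 /
          (2 * (t i.succ - t i.castSucc))
        ≤ ∑ i : Fin k, (1/2) * ∫ s in Ioc (t i.castSucc) (t i.succ), f s ^ 2 := by
          refine Finset.sum_le_sum fun i _ => ?_
          rw [hW i]
          exact key_upper (hmono (Fin.castSucc_lt_succ : i.castSucc < i.succ)) (hfint i) (hf2int i)
      _ = (1/2) * ∑ n ∈ Finset.range k, ∫ s in (a n)..(a (n+1)), f s ^ 2 := by
          rw [← Fin.sum_univ_eq_sum_range (fun n => ∫ s in (a n)..(a (n+1)), f s ^ 2) k,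
            Finset.mul_sum]
          refine Finset.sum_congr rfl fun i _ => ?_
          congr 1
          rw [← hac i, ← has i]
          exact (intervalIntegral.integral_of_le (hmono (Fin.castSucc_lt_succ : i.castSucc < i.succ)).le).symm
      _ = (1/2) * ∫ s in (a 0)..(a k), f s ^ 2 := by
          rw [intervalIntegral.sum_integral_adjacent_intervals haint]
      _ ≤ r := by
          have ha0 : a 0 = 0 := by
            simp only [ha]
            rw [show (⟨min 0 k, a_lt 0⟩ : Fin (k+1)) = 0 from Fin.ext (by simp)]
            exact h0
          have hak : a k = t (Fin.last k) := by
            simp only [ha]; congr 1; exact Fin.ext (by simp)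
          rw [ha0, hak, hrdef]
          have h1 : ∫ s in (0:ℝ)..(t (Fin.last k)), f s ^ 2
              = ∫ s in Ioc (0:ℝ) (t (Fin.last k)), f s ^ 2 :=
            intervalIntegral.integral_of_le (htnn _)
          have h2 : ∫ s in (0:ℝ)..T, f s ^ 2 = ∫ s in Ioc (0:ℝ) T, f s ^ 2 :=
            intervalIntegral.integral_of_le hT.le
          rw [h1, h2]
          have h3 : ∫ s in Ioc (0:ℝ) (t (Fin.last k)), f s ^ 2
              ≤ ∫ s in Ioc (0:ℝ) T, f s ^ 2 := by
            refine setIntegral_mono_set (hf2.mono_set Ioc_subset_Icc_self)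
              (Filter.Eventually.of_forall fun x => sq_nonneg _) ?_
            exact Filter.Eventually.of_forall fun x hx => ⟨hx.1, le_trans hx.2 (htT _)⟩
          linarith
  -- trivial partition gives S > ⊥
  have htriv := hub 0 (fun _ => 0) (Subsingleton.strictMono _) rfl (by simpa using hT.le)
  set S : EReal := ⨆ (k : ℕ) (t : Fin (k+1) → ℝ) (_ : StrictMono t) (_ : t 0 = 0)
        (_ : t (Fin.last k) ≤ T),
      (((∑ i : Fin k,
          ((∫ s in (0:ℝ)..(t i.succ), f s) - ∫ s in (0:ℝ)..(t i.castSucc), f s) ^ 2 /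
            (2 * (t i.succ - t i.castSucc))) : ℝ) : EReal) with hSdef
  have hle : ∀ (k : ℕ) (t : Fin (k+1) → ℝ) (h1 : StrictMono t) (h2 : t 0 = 0)
      (h3 : t (Fin.last k) ≤ T),
      (((∑ i : Fin k,
          ((∫ s in (0:ℝ)..(t i.succ), f s) - ∫ s in (0:ℝ)..(t i.castSucc), f s) ^ 2 /
            (2 * (t i.succ - t i.castSucc))) : ℝ) : EReal) ≤ S := by
    intro k t h1 h2 h3
    rw [hSdef]
    exact le_iSup_of_le k (le_iSup_of_le t (le_iSup_of_le h1 (le_iSup_of_le h2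
      (le_iSup_of_le h3 le_rfl))))
  apply le_antisymm
  · rw [hSdef]
    refine iSup_le fun k => iSup_le fun t => iSup_le fun h1 => iSup_le fun h2 =>
      iSup_le fun h3 => ?_
    exact EReal.coe_le_coe_iff.2 (hub k t h1 h2 h3)
  · refine le_of_forall_lt fun c hc => ?_
    induction c with
    | bot =>
        refine lt_of_lt_of_le (EReal.bot_lt_coe 0) ?_
        have h0 : ((0:ℝ) : EReal) = (((∑ i : Fin 0,
            ((∫ s in (0:ℝ)..((fun _ => (0:ℝ)) i.succ), f s)
              - ∫ s in (0:ℝ)..((fun _ => (0:ℝ)) i.castSucc), f s) ^ 2 /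
            (2 * ((fun _ => (0:ℝ)) i.succ - (fun _ => (0:ℝ)) i.castSucc))) : ℝ) : EReal) := by
          simp
        rw [h0]
        exact hle 0 (fun _ => 0) (Subsingleton.strictMono _) rfl (by simpa using hT.le)
    | coe x =>
        have hx : x < r := EReal.coe_lt_coe_iff.1 hc
        obtain ⟨k, t, h1, h2, h3, h4⟩ := exists_partition_ge T hT f hf hf2
          (show 0 < (r - x)/2 by linarith)
        refine lt_of_lt_of_le ?_ (hle k t h1 h2 h3)
        exact EReal.coe_lt_coe_iff.2 (by rw [← hrdef] at h4; linarith)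
    | top => exact absurd hc (not_top_lt)
end

section
/- Finite partition energy implies absolute continuity with L² derivative: let T > 0 and let W : [0,T] → ℝ be continuous with W(0) = 0, and suppose S := sup Σ_{i=0}^{k−1} (W(t_{i+1}) − W(t_i))²/(2(t_{i+1} − t_i)) < ∞, where the supremum is over all k ∈ ℕ and all partitions 0 = t₀ < t₁ < ⋯ < t_k ≤ T. Then there exists a measurable function f : ℝ → ℝ with ∫₀^T f(s)² ds < ∞ such that W(t) = ∫₀^t f(s) ds for every t ∈ [0,T], and moreover (1/2)∫₀^T f(s)² ds = S. -/
open MeasureTheory Filter Set intervalIntegral RealInnerProductSpace Topology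

namespace FEAC

/-! ### Dyadic grid -/

noncomputable def d (T : ℝ) (n i : ℕ) : ℝ := T * i / 2 ^ n

lemma d_zero (T : ℝ) (n : ℕ) : d T n 0 = 0 := by simp [d]

lemma d_top (T : ℝ) (n : ℕ) : d T n (2 ^ n) = T := by simp only [d]; push_cast; field_simp

variable {T : ℝ} {W : ℝ → ℝ}

lemma d_mono (hT : 0 < T) (n : ℕ) : StrictMono (d T n) := by
  intro i j hij
  have h2 : (0:ℝ) < 2 ^ n := by positivity
  have : (i:ℝ) < j := by exact_mod_cast hij
  exact div_lt_div_of_pos_right (mul_lt_mul_of_pos_left this hT) h2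

lemma d_succ_sub (T : ℝ) (n i : ℕ) : d T n (i+1) - d T n i = T / 2 ^ n := by
  have h2 : (2:ℝ) ^ n ≠ 0 := by positivity
  simp only [d]; push_cast; ring

lemma d_doubling (T : ℝ) (n m i : ℕ) (h : n ≤ m) :
    d T n i = d T m (i * 2 ^ (m - n)) := by
  have : (2:ℝ) ^ m = 2 ^ n * 2 ^ (m - n) := by
    rw [← pow_add]; congr 1; omega
  have h2 : (2:ℝ) ^ n ≠ 0 := by positivity
  have h3 : (2:ℝ) ^ (m-n) ≠ 0 := by positivity
  simp only [d]; push_cast; rw [this]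
  field_simp

lemma d_nonneg (hT : 0 < T) (n i : ℕ) : 0 ≤ d T n i := by
  rw [← d_zero T n]; exact (d_mono hT n).monotone (Nat.zero_le i)

lemma d_le_T (hT : 0 < T) {n i : ℕ} (hi : i ≤ 2 ^ n) : d T n i ≤ T :=
  le_trans ((d_mono hT n).monotone hi) (le_of_eq (d_top T n))

lemma mul_pow_le (n m j : ℕ) (h : n ≤ m) (hj : j ≤ 2 ^ n) :
    j * 2 ^ (m - n) ≤ 2 ^ m :=
  calc j * 2 ^ (m - n) ≤ 2 ^ n * 2 ^ (m - n) := Nat.mul_le_mul_right _ hj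
    _ = 2 ^ m := by rw [← pow_add]; congr 1; omega

/-! ### The piecewise-constant derivatives -/

noncomputable def sl (T : ℝ) (W : ℝ → ℝ) (n i : ℕ) : ℝ :=
  (W (d T n (i+1)) - W (d T n i)) / (T / 2 ^ n)

noncomputable def f (T : ℝ) (W : ℝ → ℝ) (n : ℕ) : ℝ → ℝ :=
  fun s => ∑ i ∈ Finset.range (2 ^ n),
    Set.indicator (Set.Ioc (d T n i) (d T n (i+1))) (fun _ => sl T W n i) s

noncomputable def E (T : ℝ) (W : ℝ → ℝ) (n : ℕ) : ℝ :=
  ∑ i ∈ Finset.range (2 ^ n),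
    (W (d T n (i+1)) - W (d T n i)) ^ 2 / (2 * (T / 2 ^ n))

lemma measurable_f (T : ℝ) (W : ℝ → ℝ) (n : ℕ) : Measurable (f T W n) := by
  apply Finset.measurable_sum
  intro i _
  exact measurable_const.indicator measurableSet_Ioc

lemma f_mul (n : ℕ) (g : ℝ → ℝ) (s : ℝ) :
    f T W n s * g s = ∑ i ∈ Finset.range (2 ^ n),
      Set.indicator (Set.Ioc (d T n i) (d T n (i+1))) (fun x => sl T W n i * g x) s := by
  rw [f, Finset.sum_mul]
  refine Finset.sum_congr rfl fun i _ => ?_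
  rw [Set.indicator_mul_left]

lemma integrable_f_mul {μ : Measure ℝ} (n : ℕ) (g : ℝ → ℝ)
    (hg : ∀ i, IntegrableOn g (Set.Ioc (d T n i) (d T n (i+1))) μ) :
    Integrable (fun x => f T W n x * g x) μ := by
  simp only [f_mul]
  apply integrable_finset_sum
  intro i _
  rw [integrable_indicator_iff measurableSet_Ioc]
  exact (hg i).const_mul _

lemma integrable_f {μ : Measure ℝ} (n : ℕ)
    (hμ : ∀ i, μ (Set.Ioc (d T n i) (d T n (i+1))) < ⊤) :
    Integrable (f T W n) μ := by
  have : f T W n = fun x => f T W n x * (1:ℝ) := by funext x; ring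
  rw [this]
  exact integrable_f_mul n 1 (fun i => ((integrableOn_const_iff).mpr (Or.inr (hμ i))))

lemma integrableOn_f_vol (n : ℕ) (s : Set ℝ) : IntegrableOn (f T W n) s := by
  apply integrable_f
  intro i
  exact lt_of_le_of_lt (Measure.restrict_apply_le _ _)
    (by rw [Real.volume_Ioc]; exact ENNReal.ofReal_lt_top)

/-! ### Integral computations -/

lemma setIntegral_f_prefix (hT : 0 < T) (n j : ℕ) (hj : j ≤ 2 ^ n) :
    ∫ x in Set.Ioc 0 (d T n j), f T W n x = W (d T n j) - W 0 := by
  have hd := d_mono hT n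
  have hd0 : ∀ i : ℕ, 0 ≤ d T n i := fun i => d_nonneg hT n i
  unfold f
  rw [MeasureTheory.integral_finset_sum]; swap
  · intro i _
    rw [integrable_indicator_iff measurableSet_Ioc]
    exact (integrableOn_const_iff).mpr (Or.inr (by
      rw [Measure.restrict_apply measurableSet_Ioc]
      exact lt_of_le_of_lt (measure_mono Set.inter_subset_left)
        (by rw [Real.volume_Ioc]; exact ENNReal.ofReal_lt_top)))
  have key : ∀ i ∈ Finset.range (2 ^ n),
      (∫ x in Set.Ioc 0 (d T n j),
        Set.indicator (Set.Ioc (d T n i) (d T n (i+1))) (fun _ => sl T W n i) x)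
      = if i < j then W (d T n (i+1)) - W (d T n i) else 0 := by
    intro i _
    rw [setIntegral_indicator measurableSet_Ioc, Set.Ioc_inter_Ioc]
    by_cases hij : i < j
    · have h1 : (0:ℝ) ⊔ d T n i = d T n i := sup_eq_right.mpr (hd0 i)
      have h2 : d T n j ⊓ d T n (i+1) = d T n (i+1) :=
        inf_eq_right.mpr (hd.monotone hij)
      rw [h1, h2, setIntegral_const, if_pos hij, measureReal_def, Real.volume_Ioc, d_succ_sub,
        ENNReal.toReal_ofReal (by positivity), sl, smul_eq_mul]
      have hΔ : T / 2 ^ n ≠ 0 := by positivity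
      field_simp
    · have hji : j ≤ i := Nat.le_of_not_lt hij
      have : d T n j ⊓ d T n (i+1) ≤ (0:ℝ) ⊔ d T n i := by
        refine le_trans (inf_le_left) (le_trans (hd.monotone hji) le_sup_right)
      rw [Set.Ioc_eq_empty_of_le this, if_neg hij]
      simp
  rw [Finset.sum_congr rfl key]
  rw [← Finset.sum_subset (Finset.range_subset_range.mpr hj)
    (fun x _ hx => if_neg (by simpa using hx))]
  rw [Finset.sum_congr rfl (fun i hi => if_pos (Finset.mem_range.mp hi))]
  rw [Finset.sum_range_sub (fun i => W (d T n i)), d_zero]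

lemma setIntegral_f_prefix' (hT : 0 < T) {n m : ℕ} (h : n ≤ m) (j : ℕ) (hj : j ≤ 2 ^ n) :
    ∫ x in Set.Ioc 0 (d T n j), f T W m x = W (d T n j) - W 0 := by
  rw [d_doubling T n m j h]
  exact setIntegral_f_prefix hT m _ (mul_pow_le n m j h hj)

lemma setIntegral_f_cell (hT : 0 < T) {n m : ℕ} (h : n ≤ m) (i : ℕ) (hi : i + 1 ≤ 2 ^ n) :
    ∫ x in Set.Ioc (d T n i) (d T n (i+1)), f T W m x
      = W (d T n (i+1)) - W (d T n i) := by
  set a := d T n i with ha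
  set b := d T n (i+1) with hb
  have hab : a ≤ b := le_of_lt ((d_mono hT n) (Nat.lt_succ_self i))
  have h0a : (0:ℝ) ≤ a := d_nonneg hT n i
  have hunion : Set.Ioc (0:ℝ) a ∪ Set.Ioc a b = Set.Ioc 0 b :=
    Set.Ioc_union_Ioc_eq_Ioc h0a hab
  have hdisj : Disjoint (Set.Ioc (0:ℝ) a) (Set.Ioc a b) := by
    rw [Set.Ioc_disjoint_Ioc]
    exact le_trans inf_le_left le_sup_right
  have hsum : (∫ x in Set.Ioc (0:ℝ) a, f T W m x) + ∫ x in Set.Ioc a b, f T W m x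
      = ∫ x in Set.Ioc (0:ℝ) b, f T W m x := by
    rw [← hunion]
    exact (setIntegral_union hdisj measurableSet_Ioc
      (integrableOn_f_vol m _) (integrableOn_f_vol m _)).symm
  have hpa : ∫ x in Set.Ioc (0:ℝ) a, f T W m x = W a - W 0 :=
    setIntegral_f_prefix' hT h i (by omega)
  have hpb : ∫ x in Set.Ioc (0:ℝ) b, f T W m x = W b - W 0 :=
    setIntegral_f_prefix' hT h (i+1) hi
  have := hsum
  rw [hpa, hpb] at this
  linarith

lemma cell_subset (hT : 0 < T) {n i : ℕ} (hi : i + 1 ≤ 2 ^ n) :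
    Set.Ioc (d T n i) (d T n (i+1)) ⊆ Set.Ioc 0 T :=
  Set.Ioc_subset_Ioc (d_nonneg hT n i) (d_le_T hT hi)

lemma integral_f_mul_f (hT : 0 < T) {n m : ℕ} (h : n ≤ m) :
    ∫ x, f T W n x * f T W m x ∂(volume.restrict (Set.Ioc 0 T)) = 2 * E T W n := by
  simp only [f_mul n (f T W m)]
  rw [MeasureTheory.integral_finset_sum]; swap
  · intro i _
    rw [integrable_indicator_iff measurableSet_Ioc, IntegrableOn,
      Measure.restrict_restrict measurableSet_Ioc]
    exact (integrableOn_f_vol m _).const_mul _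
  have key : ∀ i ∈ Finset.range (2 ^ n),
      ∫ x, Set.indicator (Set.Ioc (d T n i) (d T n (i+1)))
        (fun x => sl T W n i * f T W m x) x ∂(volume.restrict (Set.Ioc 0 T))
      = 2 * ((W (d T n (i+1)) - W (d T n i)) ^ 2 / (2 * (T / 2 ^ n))) := by
    intro i hi
    rw [MeasureTheory.integral_indicator measurableSet_Ioc,
      Measure.restrict_restrict measurableSet_Ioc,
      Set.inter_eq_left.mpr (cell_subset hT (Finset.mem_range.mp hi)),
      MeasureTheory.integral_const_mul, setIntegral_f_cell hT h i (Finset.mem_range.mp hi), sl]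
    have hΔ : T / 2 ^ n ≠ 0 := by positivity
    field_simp
  rw [Finset.sum_congr rfl key, ← Finset.mul_sum, E]

lemma memℒp_f (hT : 0 < T) (n : ℕ) : MemLp (f T W n) 2 (volume.restrict (Set.Ioc 0 T)) := by
  rw [memLp_two_iff_integrable_sq (measurable_f T W n).aestronglyMeasurable]
  have : (fun x => f T W n x ^ 2) = fun x => f T W n x * f T W n x := by
    funext x; ring
  rw [this]
  apply integrable_f_mul
  intro i
  rw [IntegrableOn, Measure.restrict_restrict measurableSet_Ioc]
  exact integrableOn_f_vol n _

/-! ### Cauchy–Schwarz on an interval -/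

lemma cs_interval {g : ℝ → ℝ} {a b : ℝ} (hab : a < b)
    (h1 : IntegrableOn g (Set.Ioc a b))
    (h2 : IntegrableOn (fun x => g x ^ 2) (Set.Ioc a b)) :
    (∫ x in Set.Ioc a b, g x) ^ 2 ≤ (b - a) * ∫ x in Set.Ioc a b, g x ^ 2 := by
  set D := b - a with hD
  have hD0 : 0 < D := by simp [hD]; linarith
  set I := ∫ x in Set.Ioc a b, g x with hI
  set c := I / D with hc
  have h0 : 0 ≤ ∫ x in Set.Ioc a b, (g x - c) ^ 2 :=
    setIntegral_nonneg measurableSet_Ioc (fun x _ => sq_nonneg _)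
  have hexp : ∫ x in Set.Ioc a b, (g x - c) ^ 2
      = (∫ x in Set.Ioc a b, g x ^ 2) - 2 * c * I + c ^ 2 * D := by
    have hptw : ∀ x, (g x - c) ^ 2 = g x ^ 2 - 2 * c * g x + c ^ 2 := by
      intro x; ring
    simp_rw [hptw]
    have ha : Integrable (fun x => g x ^ 2 - 2 * c * g x)
        (volume.restrict (Set.Ioc a b)) := h2.sub (h1.const_mul (2*c))
    have hb : Integrable (fun _ : ℝ => c ^ 2) (volume.restrict (Set.Ioc a b)) :=
      (integrableOn_const_iff).mpr (Or.inr (by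
          rw [Real.volume_Ioc]; exact ENNReal.ofReal_lt_top))
    rw [MeasureTheory.integral_add ha hb,
      MeasureTheory.integral_sub h2 (h1.const_mul (2*c)),
      MeasureTheory.integral_const_mul, setIntegral_const, smul_eq_mul,
      measureReal_def, Real.volume_Ioc, ENNReal.toReal_ofReal (by linarith)]
    ring
  have hcD : c * D = I := by rw [hc]; exact div_mul_cancel₀ _ hD0.ne'
  rw [hexp] at h0
  nlinarith [sq_nonneg (c*D - I)]

end FEAC

open FEAC in
/-- **Finite partition energy implies absolute continuity with `L²` derivative.**
Let `T > 0` and let `W : [0,T] → ℝ` be continuous with `W(0) = 0`, and suppose the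
partition Dirichlet energy
`S := sup Σ_{i<k} (W(t_{i+1}) − W(t_i))²/(2(t_{i+1} − t_i))`,
the supremum being over all `k ∈ ℕ` and all partitions `0 = t₀ < t₁ < ⋯ < t_k ≤ T`,
is finite. Then there is a measurable `f : ℝ → ℝ`, square-integrable on `[0,T]`, with
`W(t) = ∫₀^t f(s) ds` for every `t ∈ [0,T]` and `(1/2)·∫₀^T f(s)² ds = S`. -/
theorem finite_energy_absolutely_continuous (T : ℝ) (hT : 0 < T)
    (W : ℝ → ℝ) (hW : ContinuousOn W (Set.Icc 0 T)) (hW0 : W 0 = 0)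
    (S : ℝ)
    (hS : (⨆ (k : ℕ) (t : Fin (k+1) → ℝ) (_ : StrictMono t) (_ : t 0 = 0)
        (_ : t (Fin.last k) ≤ T),
      (((∑ i : Fin k,
          (W (t i.succ) - W (t i.castSucc)) ^ 2 /
            (2 * (t i.succ - t i.castSucc))) : ℝ) : EReal)) = (S : EReal)) :
    ∃ f : ℝ → ℝ, Measurable f ∧
      IntegrableOn (fun s => f s ^ 2) (Set.Icc 0 T) ∧
      (∀ t ∈ Set.Icc (0:ℝ) T, W t = ∫ s in (0:ℝ)..t, f s) ∧
      (1 / 2) * (∫ s in (0:ℝ)..T, f s ^ 2) = S := by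
  classical
  haveI : IsFiniteMeasure (volume.restrict (Set.Ioc (0:ℝ) T)) :=
    ⟨by rw [Measure.restrict_apply_univ, Real.volume_Ioc]; exact ENNReal.ofReal_lt_top⟩
  -- Step 1 : every partition sum is at most `S`
  have hpart : ∀ (k : ℕ) (t : Fin (k+1) → ℝ), StrictMono t → t 0 = 0 →
      t (Fin.last k) ≤ T →
      (∑ i : Fin k, (W (t i.succ) - W (t i.castSucc)) ^ 2 /
        (2 * (t i.succ - t i.castSucc))) ≤ S := by
    intro k t h1 h2 h3
    have h : ((∑ i : Fin k, (W (t i.succ) - W (t i.castSucc)) ^ 2 /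
        (2 * (t i.succ - t i.castSucc)) : ℝ) : EReal) ≤ (S : EReal) := by
      rw [← hS]
      exact le_iSup_of_le k (le_iSup_of_le t (le_iSup_of_le h1
        (le_iSup_of_le h2 (le_iSup_of_le h3 (le_refl _)))))
    exact_mod_cast h
  -- Step 2 : dyadic energies are at most `S`
  have hES : ∀ n, E T W n ≤ S := by
    intro n
    have h := hpart (2^n) (fun i => d T n i.1) ?_ ?_ ?_
    · refine le_trans (le_of_eq ?_) h
      rw [E, ← Fin.sum_univ_eq_sum_range]
      refine Finset.sum_congr rfl fun i _ => ?_
      simp only [Fin.val_succ, Fin.coe_castSucc, d_succ_sub]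
    · intro i j hij
      exact d_mono hT n (by exact_mod_cast hij)
    · simpa using d_zero T n
    · simpa [Fin.val_last] using le_of_eq (d_top T n)
  -- Step 3 : the `L²` sequence and its inner products
  set F : ℕ → Lp ℝ 2 (volume.restrict (Set.Ioc (0:ℝ) T)) :=
    fun n => (memℒp_f (W := W) hT n).toLp _ with hF
  have h_inner : ∀ {n m : ℕ}, n ≤ m → (inner ℝ (F n) (F m) : ℝ) = 2 * E T W n := by
    intro n m h
    rw [L2.inner_def, ← integral_f_mul_f (W := W) hT h]
    apply MeasureTheory.integral_congr_ae
    filter_upwards [(memℒp_f (W := W) hT n).coeFn_toLp,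
      (memℒp_f (W := W) hT m).coeFn_toLp] with x h1 h2
    simp [hF, RCLike.inner_apply, starRingEnd_apply, h1, h2, mul_comm]
  have hnorm_sub : ∀ {n m : ℕ}, n ≤ m →
      ‖F m - F n‖^2 = 2 * E T W m - 2 * E T W n := by
    intro n m h
    have e4 : (inner ℝ (F m) (F n) : ℝ) = 2 * E T W n := by
      rw [real_inner_comm]; exact h_inner h
    rw [← real_inner_self_eq_norm_sq, inner_sub_left, inner_sub_right, inner_sub_right,
      h_inner (le_refl m), h_inner (le_refl n), e4, h_inner h]
    ring
  have hEmono : Monotone (E T W) := by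
    intro n m h
    have h1 := hnorm_sub h
    nlinarith [sq_nonneg (‖F m - F n‖)]
  have hbdd : BddAbove (Set.range (E T W)) := ⟨S, by rintro x ⟨n, rfl⟩; exact hES n⟩
  have hEtend : Tendsto (E T W) atTop (𝓝 (⨆ n, E T W n)) := tendsto_atTop_ciSup hEmono hbdd
  set L := ⨆ n, E T W n with hLdef
  have hFcauchy : CauchySeq F := by
    rw [Metric.cauchySeq_iff]
    intro ε hε
    obtain ⟨N, hN⟩ := Metric.cauchySeq_iff.mp hEtend.cauchySeq (ε^2/2) (by positivity)
    refine ⟨N, fun m hm n hn => ?_⟩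
    have h2 : |E T W m - E T W n| < ε^2/2 := by
      have := hN m hm n hn; rwa [Real.dist_eq] at this
    rw [dist_eq_norm]
    rcases le_total n m with h | h
    · have h3 : ‖F m - F n‖^2 < ε^2 := by
        rw [hnorm_sub h]
        rcases abs_lt.mp h2 with ⟨_, hb⟩
        linarith
      exact lt_of_pow_lt_pow_left₀ 2 hε.le h3
    · have h3 : ‖F n - F m‖^2 < ε^2 := by
        rw [hnorm_sub h]
        rcases abs_lt.mp h2 with ⟨ha, _⟩
        linarith
      rw [norm_sub_rev]
      exact lt_of_pow_lt_pow_left₀ 2 hε.le h3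
  obtain ⟨G, hG⟩ := cauchySeq_tendsto_of_complete hFcauchy
  -- Step 4 : the limit function
  have hm := Lp.aestronglyMeasurable G
  set φ : ℝ → ℝ := hm.mk _ with hφ
  have hφmeas : Measurable φ := hm.stronglyMeasurable_mk.measurable
  have hae : (G : ℝ → ℝ) =ᵐ[volume.restrict (Set.Ioc (0:ℝ) T)] φ := hm.ae_eq_mk
  have hmemφ : MemLp φ 2 (volume.restrict (Set.Ioc (0:ℝ) T)) := (Lp.memLp G).ae_eq hae
  have hφ2int : Integrable (fun x => φ x ^ 2) (volume.restrict (Set.Ioc (0:ℝ) T)) :=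
    hmemφ.integrable_sq
  have hφint : IntegrableOn φ (Set.Ioc (0:ℝ) T) := hmemφ.integrable one_le_two
  have hφ2int' : IntegrableOn (fun x => φ x ^ 2) (Set.Ioc (0:ℝ) T) := hφ2int
  -- Step 5 : `W` equals the primitive of `φ` on grid points
  have hgrid : ∀ n j, j ≤ 2^n → W (d T n j) = ∫ x in Set.Ioc (0:ℝ) (d T n j), φ x := by
    intro n j hj
    have ht0 : 0 ≤ d T n j := d_nonneg hT n j
    have htT : d T n j ≤ T := d_le_T hT hj
    have hsub : Set.Ioc (0:ℝ) (d T n j) ⊆ Set.Ioc 0 T := Set.Ioc_subset_Ioc le_rfl htT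
    set g : ℝ → ℝ := Set.indicator (Set.Ioc (0:ℝ) (d T n j)) (fun _ => (1:ℝ)) with hg
    have hgmem : MemLp g 2 (volume.restrict (Set.Ioc (0:ℝ) T)) :=
      MemLp.indicator measurableSet_Ioc (memLp_const 1)
    set H : Lp ℝ 2 (volume.restrict (Set.Ioc (0:ℝ) T)) := hgmem.toLp g with hH
    have hmul : ∀ (h : ℝ → ℝ) (x : ℝ),
        g x * h x = Set.indicator (Set.Ioc (0:ℝ) (d T n j)) h x := by
      intro h x
      by_cases hx : x ∈ Set.Ioc (0:ℝ) (d T n j)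
      · simp [hg, Set.indicator_of_mem hx]
      · simp [hg, Set.indicator_of_notMem hx]
    have hHF : ∀ m, n ≤ m → (inner ℝ H (F m) : ℝ) = W (d T n j) := by
      intro m hm
      rw [L2.inner_def]
      have key : ∫ x, g x * f T W m x ∂(volume.restrict (Set.Ioc (0:ℝ) T)) = W (d T n j) := by
        have he : (fun x => g x * f T W m x)
            = Set.indicator (Set.Ioc (0:ℝ) (d T n j)) (f T W m) := funext (hmul _)
        rw [he, MeasureTheory.integral_indicator measurableSet_Ioc,
          Measure.restrict_restrict measurableSet_Ioc, Set.inter_eq_left.mpr hsub,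
          setIntegral_f_prefix' hT hm j hj, hW0, sub_zero]
      rw [← key]
      apply MeasureTheory.integral_congr_ae
      filter_upwards [hgmem.coeFn_toLp, (memℒp_f (W := W) hT m).coeFn_toLp] with x h1 h2
      simp [hH, hF, RCLike.inner_apply, starRingEnd_apply, h1, h2, mul_comm]
    have hHG : (inner ℝ H G : ℝ) = ∫ x in Set.Ioc (0:ℝ) (d T n j), φ x := by
      rw [L2.inner_def]
      have key : ∫ x, g x * φ x ∂(volume.restrict (Set.Ioc (0:ℝ) T))
          = ∫ x in Set.Ioc (0:ℝ) (d T n j), φ x := by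
        have he : (fun x => g x * φ x)
            = Set.indicator (Set.Ioc (0:ℝ) (d T n j)) φ := funext (hmul _)
        rw [he, MeasureTheory.integral_indicator measurableSet_Ioc,
          Measure.restrict_restrict measurableSet_Ioc, Set.inter_eq_left.mpr hsub]
      rw [← key]
      apply MeasureTheory.integral_congr_ae
      filter_upwards [hgmem.coeFn_toLp, hae] with x h1 h2
      simp [hH, RCLike.inner_apply, starRingEnd_apply, h1, ← h2, mul_comm]
    have hlim : Tendsto (fun m => (inner ℝ H (F m) : ℝ)) atTop (𝓝 (inner ℝ H G : ℝ)) :=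
      Filter.Tendsto.inner tendsto_const_nhds hG
    have hlim2 : Tendsto (fun m => (inner ℝ H (F m) : ℝ)) atTop (𝓝 (W (d T n j))) := by
      apply Tendsto.congr' _ tendsto_const_nhds
      filter_upwards [eventually_ge_atTop n] with m hm
      exact (hHF m hm).symm
    rw [← hHG]
    exact (tendsto_nhds_unique hlim2 hlim)
  -- Step 5b : `W` equals the primitive everywhere on `[0,T]`
  set P : ℝ → ℝ := fun x => ∫ s in (0:ℝ)..x, φ s with hP
  have hgrid' : ∀ n j, j ≤ 2^n → W (d T n j) = P (d T n j) := by
    intro n j hj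
    show W (d T n j) = ∫ s in (0:ℝ)..(d T n j), φ s
    rw [intervalIntegral.integral_of_le (d_nonneg hT n j)]
    exact hgrid n j hj
  have hPcont : ContinuousOn P (Set.Icc 0 T) := by
    have huIcc : Set.uIcc (0:ℝ) T = Set.Icc 0 T := Set.uIcc_of_le hT.le
    have hint : IntegrableOn φ (Set.uIcc (0:ℝ) T) := by
      rw [huIcc, integrableOn_Icc_iff_integrableOn_Ioc]
      exact hφint
    have := intervalIntegral.continuousOn_primitive_interval hint
    rwa [huIcc] at this
  have hWP : ∀ t ∈ Set.Icc (0:ℝ) T, W t = P t := by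
    rintro t ⟨ht0, htT⟩
    set q : ℕ → ℝ := fun n => d T n ⌊t * 2^n / T⌋₊ with hq
    have hjle : ∀ n : ℕ, ⌊t * 2^n / T⌋₊ ≤ 2^n := by
      intro n
      apply Nat.floor_le_of_le
      rw [div_le_iff₀ hT]
      push_cast
      nlinarith [pow_pos (by norm_num : (0:ℝ) < 2) n]
    have hqmem : ∀ n, q n ∈ Set.Icc (0:ℝ) T :=
      fun n => ⟨d_nonneg hT n _, d_le_T hT (hjle n)⟩
    have hq_eq : ∀ n, W (q n) = P (q n) := fun n => hgrid' n _ (hjle n)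
    have hq_le : ∀ n, q n ≤ t := by
      intro n
      have h2 : (0:ℝ) < 2^n := by positivity
      have hfl : (⌊t * 2^n / T⌋₊ : ℝ) ≤ t * 2^n / T := Nat.floor_le (by positivity)
      show T * (⌊t * 2^n / T⌋₊ : ℝ) / 2^n ≤ t
      rw [div_le_iff₀ h2]
      calc T * (⌊t * 2^n / T⌋₊ : ℝ) ≤ T * (t * 2^n / T) := by
            exact mul_le_mul_of_nonneg_left hfl hT.le
        _ = t * 2^n := by field_simp
    have hq_gt : ∀ n, t - T/2^n < q n := by
      intro n
      have h2 : (0:ℝ) < 2^n := by positivity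
      have h1 : t * 2^n / T < (⌊t * 2^n / T⌋₊ : ℝ) + 1 := Nat.lt_floor_add_one _
      have h3 : t * 2^n < ((⌊t * 2^n / T⌋₊ : ℝ) + 1) * T := by
        rwa [div_lt_iff₀ hT] at h1
      show t - T/2^n < T * (⌊t * 2^n / T⌋₊ : ℝ) / 2^n
      rw [sub_lt_iff_lt_add, ← add_div, lt_div_iff₀ h2]
      nlinarith
    have hq_tend : Tendsto q atTop (𝓝 t) := by
      apply tendsto_iff_dist_tendsto_zero.mpr
      have hb : ∀ n, dist (q n) t ≤ T/2^n := by
        intro n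
        rw [Real.dist_eq, abs_le]
        constructor
        · have := hq_gt n; linarith
        · have h1 := hq_le n
          have h2 : (0:ℝ) ≤ T/2^n := by positivity
          linarith
      apply squeeze_zero (fun n => dist_nonneg) hb
      have h5 : Tendsto (fun n : ℕ => T * (1/2:ℝ)^n) atTop (𝓝 0) := by
        simpa using (tendsto_pow_atTop_nhds_zero_of_lt_one (by norm_num : (0:ℝ) ≤ 1/2)
          (by norm_num : (1/2:ℝ) < 1)).const_mul T
      refine h5.congr fun n => ?_
      rw [div_pow, one_pow, mul_one_div]
    have hqwithin : Tendsto q atTop (𝓝[Set.Icc (0:ℝ) T] t) :=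
      tendsto_nhdsWithin_of_tendsto_nhds_of_eventually_within q hq_tend
        (Eventually.of_forall hqmem)
    have hWlim : Tendsto (fun n => W (q n)) atTop (𝓝 (W t)) :=
      Filter.Tendsto.comp (hW t ⟨ht0, htT⟩) hqwithin
    have hPlim : Tendsto (fun n => W (q n)) atTop (𝓝 (P t)) :=
      (Filter.Tendsto.comp (hPcont t ⟨ht0, htT⟩) hqwithin).congr
        (fun n => (hq_eq n).symm)
    exact tendsto_nhds_unique hWlim hPlim
  -- Step 6 : the energy identity
  have hnormsq : ∀ n, ‖F n‖^2 = 2 * E T W n := by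
    intro n
    rw [← real_inner_self_eq_norm_sq, h_inner (le_refl n)]
  have hGsq : ‖G‖^2 = 2 * L := by
    have h1 : Tendsto (fun n => ‖F n‖^2) atTop (𝓝 (‖G‖^2)) := (hG.norm).pow 2
    have h2 : Tendsto (fun n => 2 * E T W n) atTop (𝓝 (2 * L)) := hEtend.const_mul 2
    exact tendsto_nhds_unique (h1.congr fun n => hnormsq n) h2
  have hGint : ‖G‖^2 = ∫ x, φ x ^ 2 ∂(volume.restrict (Set.Ioc (0:ℝ) T)) := by
    rw [← real_inner_self_eq_norm_sq, L2.inner_def]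
    apply MeasureTheory.integral_congr_ae
    filter_upwards [hae] with x h1
    simp [RCLike.inner_apply, starRingEnd_apply, h1, sq]
  have hphiT : ∫ s in (0:ℝ)..T, φ s ^ 2 = 2 * L := by
    rw [intervalIntegral.integral_of_le hT.le, ← hGsq, hGint]
  -- Step 7 : `L = S`
  have hLleS : L ≤ S := ciSup_le hES
  have hSleL : S ≤ L := by
    have hub : ∀ (k : ℕ) (t : Fin (k+1) → ℝ), StrictMono t → t 0 = 0 →
        t (Fin.last k) ≤ T →
        (∑ i : Fin k, (W (t i.succ) - W (t i.castSucc)) ^ 2 /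
          (2 * (t i.succ - t i.castSucc))) ≤ L := by
      intro k t hst ht0 htl
      have hmem : ∀ i : Fin (k+1), t i ∈ Set.Icc (0:ℝ) T := by
        intro i
        exact ⟨ht0 ▸ hst.monotone (Fin.zero_le i),
          le_trans (hst.monotone (Fin.le_last i)) htl⟩
      have hseg : ∀ i : Fin k,
          (W (t i.succ) - W (t i.castSucc))^2 / (2*(t i.succ - t i.castSucc))
            ≤ (∫ x in Set.Ioc (t i.castSucc) (t i.succ), φ x ^ 2) / 2 := by
        intro i
        set a := t i.castSucc with hadef
        set b := t i.succ with hbdef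
        have hab : a < b := hst (Fin.castSucc_lt_succ (i := i))
        have h0a : (0:ℝ) ≤ a := (hmem _).1
        have hbT : b ≤ T := (hmem _).2
        have hsub1 : Set.Ioc (0:ℝ) a ⊆ Set.Ioc 0 T :=
          Set.Ioc_subset_Ioc le_rfl (le_trans hab.le hbT)
        have hsub2 : Set.Ioc a b ⊆ Set.Ioc 0 T := Set.Ioc_subset_Ioc h0a hbT
        have hint1 : IntegrableOn φ (Set.Ioc (0:ℝ) a) := hφint.mono_set hsub1
        have hint2 : IntegrableOn φ (Set.Ioc a b) := hφint.mono_set hsub2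
        have hint2' : IntegrableOn (fun x => φ x ^ 2) (Set.Ioc a b) :=
          hφ2int'.mono_set hsub2
        have hdiff : W b - W a = ∫ x in Set.Ioc a b, φ x := by
          rw [hWP a (hmem _), hWP b (hmem _)]
          show (∫ s in (0:ℝ)..b, φ s) - (∫ s in (0:ℝ)..a, φ s) = _
          rw [intervalIntegral.integral_of_le (le_trans h0a hab.le),
            intervalIntegral.integral_of_le h0a]
          have hunion : Set.Ioc (0:ℝ) a ∪ Set.Ioc a b = Set.Ioc 0 b :=
            Set.Ioc_union_Ioc_eq_Ioc h0a hab.le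
          have hdisj : Disjoint (Set.Ioc (0:ℝ) a) (Set.Ioc a b) := by
            rw [Set.Ioc_disjoint_Ioc]
            exact le_trans inf_le_left le_sup_right
          rw [← hunion, setIntegral_union hdisj measurableSet_Ioc hint1 hint2]
          ring
        have hcs : (W b - W a)^2 ≤ (b - a) * ∫ x in Set.Ioc a b, φ x ^ 2 := by
          rw [hdiff]
          exact cs_interval hab hint2 hint2'
        have h2Δ : (0:ℝ) < 2 * (b - a) := by linarith
        rw [div_le_div_iff₀ h2Δ (by norm_num : (0:ℝ) < 2)]
        calc (W b - W a)^2 * 2 ≤ ((b - a) * ∫ x in Set.Ioc a b, φ x ^ 2) * 2 :=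
              mul_le_mul_of_nonneg_right hcs (by norm_num)
          _ = (∫ x in Set.Ioc a b, φ x ^ 2) * (2 * (b - a)) := by ring
      have hsum2 : ∑ i : Fin k, (∫ x in Set.Ioc (t i.castSucc) (t i.succ), φ x ^ 2)
          ≤ ∫ x in Set.Ioc (0:ℝ) T, φ x ^ 2 := by
        have hsubs : ∀ i : Fin k, Set.Ioc (t i.castSucc) (t i.succ) ⊆ Set.Ioc 0 T :=
          fun i => Set.Ioc_subset_Ioc (hmem _).1 (hmem _).2
        rw [← MeasureTheory.integral_biUnion_finset Finset.univ
          (fun i _ => measurableSet_Ioc) ?_ (fun i _ => hφ2int'.mono_set (hsubs i))]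
        · apply setIntegral_mono_set hφ2int'
            (Eventually.of_forall (fun x => sq_nonneg _))
          apply HasSubset.Subset.eventuallyLE
          exact Set.iUnion₂_subset fun i _ => hsubs i
        · intro i _ j _ hij
          rcases Fin.lt_or_lt_of_ne hij with h | h
          · have : t i.succ ≤ t j.castSucc := hst.monotone (by
              rw [Fin.le_def]
              simp only [Fin.val_succ, Fin.coe_castSucc]
              exact h)
            simp only [Function.onFun]
            rw [Set.Ioc_disjoint_Ioc]
            exact le_trans inf_le_left (le_trans this le_sup_right)
          · have : t j.succ ≤ t i.castSucc := hst.monotone (by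
              rw [Fin.le_def]
              simp only [Fin.val_succ, Fin.coe_castSucc]
              exact h)
            simp only [Function.onFun]
            rw [Set.Ioc_disjoint_Ioc]
            exact le_trans inf_le_right (le_trans this le_sup_left)
      calc (∑ i : Fin k, (W (t i.succ) - W (t i.castSucc)) ^ 2 /
              (2 * (t i.succ - t i.castSucc)))
          ≤ ∑ i : Fin k, (∫ x in Set.Ioc (t i.castSucc) (t i.succ), φ x ^ 2) / 2 :=
            Finset.sum_le_sum (fun i _ => hseg i)
        _ = (∑ i : Fin k, ∫ x in Set.Ioc (t i.castSucc) (t i.succ), φ x ^ 2) / 2 := by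
            rw [Finset.sum_div]
        _ ≤ (∫ x in Set.Ioc (0:ℝ) T, φ x ^ 2) / 2 := by linarith
        _ = L := by
            have : ∫ x in Set.Ioc (0:ℝ) T, φ x ^ 2 = 2 * L := by
              rw [← hphiT, intervalIntegral.integral_of_le hT.le]
            rw [this]; ring
    have hh : (S : EReal) ≤ (L : EReal) := by
      rw [← hS]
      refine iSup_le fun k => iSup_le fun t => iSup_le fun h1 => iSup_le fun h2 =>
        iSup_le fun h3 => ?_
      exact_mod_cast hub k t h1 h2 h3
    exact_mod_cast hh
  have hLS : L = S := le_antisymm hLleS hSleL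
  -- Conclusion
  refine ⟨φ, hφmeas, ?_, ?_, ?_⟩
  · rw [integrableOn_Icc_iff_integrableOn_Ioc]
    exact hφ2int
  · intro t ht
    exact hWP t ht
  · rw [hphiT, ← hLS]
    ring
end

section
/- Invariance of the H^{1/2} seminorm under the Cayley transform: let ϑ : ℝ → ℂ be the Cayley map ϑ(t) = (t − i)/(t + i), which maps ℝ into the unit circle. Then for every measurable function u : ℂ → ℝ, ∬_{ℝ×ℝ} (u(ϑ(s)) − u(ϑ(t)))²/(s − t)² ds dt = ∬_{[0,2π)×[0,2π)} (u(e^{iα}) − u(e^{iβ}))²/|e^{iα} − e^{iβ}|² dα dβ, where both sides are Lebesgue integrals of nonnegative functions and the equality holds in [0,∞]. -/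
open MeasureTheory Set Real
open scoped ENNReal

noncomputable def cayleyPsi (t : ℝ) : ℝ := π + 2 * Real.arctan t

lemma cayleyPsi_hasDerivAt (t : ℝ) : HasDerivAt cayleyPsi (2 / (1 + t ^ 2)) t := by
  have h := ((Real.hasDerivAt_arctan t).const_mul 2).const_add π
  rw [show (2 : ℝ) / (1 + t ^ 2) = 2 * (1 / (1 + t ^ 2)) by ring]
  exact h

lemma cayleyPsi_injective : Function.Injective cayleyPsi := by
  intro a b h
  exact Real.arctan_injective (by unfold cayleyPsi at h; linarith)

lemma cayleyPsi_range : Set.range cayleyPsi = Ioo 0 (2 * π) := by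
  ext x
  simp only [mem_range, mem_Ioo]
  constructor
  · rintro ⟨t, rfl⟩
    have h1 := Real.neg_pi_div_two_lt_arctan t
    have h2 := Real.arctan_lt_pi_div_two t
    constructor <;> (unfold cayleyPsi; linarith)
  · rintro ⟨h1, h2⟩
    refine ⟨Real.tan ((x - π) / 2), ?_⟩
    unfold cayleyPsi
    rw [Real.arctan_tan (by linarith) (by linarith)]
    ring

lemma exp_cayleyPsi (t : ℝ) :
    Complex.exp ((cayleyPsi t : ℂ) * Complex.I)
      = ((t : ℂ) - Complex.I) / ((t : ℂ) + Complex.I) := by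
  have hd : ((t : ℂ) + Complex.I) ≠ 0 := by
    intro h
    have := congrArg Complex.im h
    simp at this
  have hpos : (0 : ℝ) < 1 + t ^ 2 := by positivity
  have hss : Real.sqrt (1 + t ^ 2) * Real.sqrt (1 + t ^ 2) = 1 + t ^ 2 :=
    Real.mul_self_sqrt hpos.le
  have hs0 : Real.sqrt (1 + t ^ 2) ≠ 0 := by positivity
  have hcos : Real.cos (cayleyPsi t) = (t ^ 2 - 1) / (1 + t ^ 2) := by
    unfold cayleyPsi
    rw [add_comm π, Real.cos_add_pi, Real.cos_two_mul, Real.cos_arctan]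
    field_simp
    linarith [hss]
  have hsin : Real.sin (cayleyPsi t) = -(2 * t) / (1 + t ^ 2) := by
    unfold cayleyPsi
    rw [add_comm π, Real.sin_add_pi, Real.sin_two_mul, Real.sin_arctan, Real.cos_arctan]
    field_simp
    rw [Real.sq_sqrt hpos.le]
  have h10 : ((1 : ℂ) + (t : ℂ) ^ 2) ≠ 0 := by exact_mod_cast hpos.ne'
  rw [Complex.exp_mul_I, ← Complex.ofReal_cos, ← Complex.ofReal_sin, hcos, hsin]
  push_cast
  field_simp
  linear_combination (-2*(t:ℂ)) * Complex.I_sq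

lemma cayley_abs_sq (s t : ℝ) :
    ‖((s : ℂ) - Complex.I) / ((s : ℂ) + Complex.I)
        - ((t : ℂ) - Complex.I) / ((t : ℂ) + Complex.I)‖ ^ 2
      = 4 * (s - t) ^ 2 / ((1 + s ^ 2) * (1 + t ^ 2)) := by
  have hs : ((s : ℂ) + Complex.I) ≠ 0 := by
    intro h; have := congrArg Complex.im h; simp at this
  have ht : ((t : ℂ) + Complex.I) ≠ 0 := by
    intro h; have := congrArg Complex.im h; simp at this
  have key : ((s : ℂ) - Complex.I) / ((s : ℂ) + Complex.I)
        - ((t : ℂ) - Complex.I) / ((t : ℂ) + Complex.I)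
      = 2 * Complex.I * ((s : ℂ) - (t : ℂ)) / (((s : ℂ) + Complex.I) * ((t : ℂ) + Complex.I)) := by
    field_simp
    ring
  rw [key, Complex.sq_norm, Complex.normSq_div]
  simp only [Complex.normSq_mul, Complex.normSq_apply, Complex.add_re, Complex.add_im,
    Complex.sub_re, Complex.sub_im, Complex.mul_re, Complex.mul_im, Complex.I_re, Complex.I_im,
    Complex.ofReal_re, Complex.ofReal_im, Complex.re_ofNat, Complex.im_ofNat]
  ring_nf

lemma cayley_pointwise (u : ℂ → ℝ) (s t : ℝ) :
    ENNReal.ofReal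
        ((u (((s : ℂ) - Complex.I) / ((s : ℂ) + Complex.I)) -
            u (((t : ℂ) - Complex.I) / ((t : ℂ) + Complex.I))) ^ 2 / (s - t) ^ 2)
      = ENNReal.ofReal (2 / (1 + s ^ 2)) * (ENNReal.ofReal (2 / (1 + t ^ 2)) *
          ENNReal.ofReal
            ((u (((s : ℂ) - Complex.I) / ((s : ℂ) + Complex.I)) -
                u (((t : ℂ) - Complex.I) / ((t : ℂ) + Complex.I))) ^ 2 /
              ‖((s : ℂ) - Complex.I) / ((s : ℂ) + Complex.I) -
                ((t : ℂ) - Complex.I) / ((t : ℂ) + Complex.I)‖ ^ 2)) := by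
  set a : ℝ := u (((s : ℂ) - Complex.I) / ((s : ℂ) + Complex.I)) -
      u (((t : ℂ) - Complex.I) / ((t : ℂ) + Complex.I)) with ha
  rcases eq_or_ne s t with rfl | hne
  · have : a = 0 := by rw [ha, sub_self]
    simp [this]
  · rw [← ENNReal.ofReal_mul (by positivity), ← ENNReal.ofReal_mul (by positivity),
      cayley_abs_sq]
    congr 1
    have hst : s - t ≠ 0 := sub_ne_zero.mpr hne
    have h1 : (1 : ℝ) + s ^ 2 ≠ 0 := by positivity
    have h2 : (1 : ℝ) + t ^ 2 ≠ 0 := by positivity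
    field_simp
    ring

lemma lintegral_Ioo_eq_cayleyPsi (g : ℝ → ℝ≥0∞) :
    ∫⁻ x in Ioo (0 : ℝ) (2 * π), g x
      = ∫⁻ x, ENNReal.ofReal (2 / (1 + x ^ 2)) * g (cayleyPsi x) := by
  have h := MeasureTheory.lintegral_image_eq_lintegral_abs_det_fderiv_mul volume
    MeasurableSet.univ
    (fun x _ => (cayleyPsi_hasDerivAt x).hasDerivWithinAt.hasFDerivWithinAt)
    (cayleyPsi_injective.injOn) g
  rw [image_univ, cayleyPsi_range, Measure.restrict_univ] at h
  rw [h]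
  congr 1
  ext x
  rw [ContinuousLinearMap.det_toSpanSingleton, abs_of_pos (by positivity)]

/-- **Invariance of the `H^{1/2}` seminorm under the Cayley transform.** Let
`ϑ(t) = (t − i)/(t + i)` be the Cayley map sending `ℝ` into the unit circle. Then for every
measurable `u : ℂ → ℝ`,
`∬_{ℝ×ℝ} (u(ϑ(s)) − u(ϑ(t)))²/(s − t)² ds dt
  = ∬_{[0,2π)×[0,2π)} (u(e^{iα}) − u(e^{iβ}))²/|e^{iα} − e^{iβ}|² dα dβ`,
both sides being Lebesgue integrals of nonnegative functions, with values in `[0,∞]`. -/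
theorem cayley_H_half_invariance (u : ℂ → ℝ) (hu : Measurable u) :
    (∫⁻ p : ℝ × ℝ,
        ENNReal.ofReal
          ((u (((p.1 : ℂ) - Complex.I) / ((p.1 : ℂ) + Complex.I)) -
              u (((p.2 : ℂ) - Complex.I) / ((p.2 : ℂ) + Complex.I))) ^ 2 /
            (p.1 - p.2) ^ 2)) =
      ∫⁻ p in Set.Ico (0:ℝ) (2 * π) ×ˢ Set.Ico (0:ℝ) (2 * π),
        ENNReal.ofReal
          ((u (Complex.exp (p.1 * Complex.I)) - u (Complex.exp (p.2 * Complex.I))) ^ 2 /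
            ‖Complex.exp (p.1 * Complex.I) - Complex.exp (p.2 * Complex.I)‖ ^ 2) := by
  have mθ : Measurable fun t : ℝ => ((t : ℂ) - Complex.I) / ((t : ℂ) + Complex.I) :=
    (Complex.measurable_ofReal.sub measurable_const).div
      (Complex.measurable_ofReal.add measurable_const)
  have me : Measurable fun α : ℝ => Complex.exp ((α : ℂ) * Complex.I) :=
    ((Complex.continuous_ofReal.mul continuous_const).cexp).measurable
  have mψ : Measurable cayleyPsi :=
    (continuous_const.add (continuous_const.mul Real.continuous_arctan)).measurable
  have mw : Measurable fun t : ℝ => ENNReal.ofReal (2 / (1 + t ^ 2)) := by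
    apply Measurable.ennreal_ofReal
    exact (measurable_const.div ((measurable_const.add (measurable_id.pow_const 2))))
  set G : ℝ × ℝ → ℝ≥0∞ := fun p =>
    ENNReal.ofReal ((u (Complex.exp ((p.1 : ℂ) * Complex.I)) -
        u (Complex.exp ((p.2 : ℂ) * Complex.I))) ^ 2 /
      ‖Complex.exp ((p.1 : ℂ) * Complex.I) -
        Complex.exp ((p.2 : ℂ) * Complex.I)‖ ^ 2) with hGdef
  set F : ℝ × ℝ → ℝ≥0∞ := fun p =>
    ENNReal.ofReal ((u (((p.1 : ℂ) - Complex.I) / ((p.1 : ℂ) + Complex.I)) -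
        u (((p.2 : ℂ) - Complex.I) / ((p.2 : ℂ) + Complex.I))) ^ 2 /
      (p.1 - p.2) ^ 2) with hFdef
  have hGmeas : Measurable G := by
    apply Measurable.ennreal_ofReal
    apply Measurable.div
    · exact ((hu.comp (me.comp measurable_fst)).sub (hu.comp (me.comp measurable_snd))).pow_const 2
    · exact (continuous_norm.measurable.comp
        ((me.comp measurable_fst).sub (me.comp measurable_snd))).pow_const 2
  have hFmeas : Measurable F := by
    apply Measurable.ennreal_ofReal
    apply Measurable.div
    · exact ((hu.comp (mθ.comp measurable_fst)).sub (hu.comp (mθ.comp measurable_snd))).pow_const 2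
    · exact (measurable_fst.sub measurable_snd).pow_const 2
  -- replace Ico by Ioo
  have hae : (Ico (0:ℝ) (2*π) ×ˢ Ico (0:ℝ) (2*π) : Set (ℝ × ℝ)) =ᵐ[volume]
      (Ioo (0:ℝ) (2*π) ×ˢ Ioo (0:ℝ) (2*π) : Set (ℝ × ℝ)) := by
    rw [MeasureTheory.ae_eq_set]
    constructor
    · apply measure_mono_null (t := ({(0:ℝ)} ×ˢ (univ : Set ℝ)) ∪ ((univ : Set ℝ) ×ˢ {(0:ℝ)}))
      · rintro ⟨x, y⟩ ⟨⟨⟨hx1, hx2⟩, hy1, hy2⟩, hne⟩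
        by_cases hx : x = 0
        · exact Or.inl ⟨hx, trivial⟩
        · refine Or.inr ⟨trivial, ?_⟩
          by_contra hy
          exact hne ⟨⟨lt_of_le_of_ne hx1 (Ne.symm hx), hx2⟩,
            lt_of_le_of_ne hy1 (Ne.symm hy), hy2⟩
      · rw [Measure.volume_eq_prod]
        apply measure_union_null <;> (rw [Measure.prod_prod]; simp)
    · apply measure_mono_null (t := (∅ : Set (ℝ × ℝ)))
      · rintro ⟨x, y⟩ ⟨⟨⟨hx1, hx2⟩, hy1, hy2⟩, hne⟩
        exact absurd ⟨⟨hx1.le, hx2⟩, hy1.le, hy2⟩ hne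
      · exact measure_empty
  rw [Measure.restrict_congr_set hae, Measure.volume_eq_prod, ← Measure.prod_restrict,
    lintegral_prod F hFmeas.aemeasurable, lintegral_prod G hGmeas.aemeasurable]
  rw [lintegral_Ioo_eq_cayleyPsi (fun α => ∫⁻ β in Ioo (0:ℝ) (2*π), G (α, β))]
  refine lintegral_congr fun s => ?_
  rw [lintegral_Ioo_eq_cayleyPsi (fun β => G (cayleyPsi s, β))]
  have hpt : ∀ t : ℝ, F (s, t)
      = ENNReal.ofReal (2 / (1 + s ^ 2)) *
          (ENNReal.ofReal (2 / (1 + t ^ 2)) * G (cayleyPsi s, cayleyPsi t)) := by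
    intro t
    simp only [hFdef, hGdef, exp_cayleyPsi]
    exact cayley_pointwise u s t
  calc ∫⁻ t, F (s, t) = ∫⁻ t, ENNReal.ofReal (2 / (1 + s ^ 2)) *
        (ENNReal.ofReal (2 / (1 + t ^ 2)) * G (cayleyPsi s, cayleyPsi t)) :=
        lintegral_congr hpt
    _ = ENNReal.ofReal (2 / (1 + s ^ 2)) * ∫⁻ t,
          ENNReal.ofReal (2 / (1 + t ^ 2)) * G (cayleyPsi s, cayleyPsi t) := by
        apply lintegral_const_mul
        exact mw.mul (hGmeas.comp (measurable_const.prodMk mψ))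
end

section
/- Let u : ℝ → ℝ be measurable with finite H^{1/2}(ℝ) seminorm, i.e. ∬_{ℝ×ℝ} (u(s) − u(t))²/(s − t)² ds dt < ∞. Then the measure dμ = e^{u(x)} dx assigns infinite mass to every unbounded interval: for every a ∈ ℝ, ∫_{[a,∞)} e^{u(x)} dx = ∞ and ∫_{(−∞,a]} e^{u(x)} dx = ∞. -/
open MeasureTheory Set Filter

variable {u : ℝ → ℝ}

private lemma ker_meas (hu : Measurable u) :
    Measurable (fun p : ℝ × ℝ => ENNReal.ofReal ((u p.1 - u p.2) ^ 2 / (p.1 - p.2) ^ 2)) := by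
  apply ENNReal.measurable_ofReal.comp
  exact (((hu.comp measurable_fst).sub (hu.comp measurable_snd)).pow_const 2).div
    ((measurable_fst.sub measurable_snd).pow_const 2)

private lemma sq_le_ker {D : ℝ} {p : ℝ × ℝ} (hD : |p.1 - p.2| ≤ D) :
    ENNReal.ofReal ((u p.1 - u p.2) ^ 2) ≤
      ENNReal.ofReal (D ^ 2) * ENNReal.ofReal ((u p.1 - u p.2) ^ 2 / (p.1 - p.2) ^ 2) := by
  rw [← ENNReal.ofReal_mul (by positivity)]
  apply ENNReal.ofReal_le_ofReal
  rcases eq_or_ne p.1 p.2 with h | h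
  · simp [h]
  · have hd : (p.1 - p.2) ^ 2 ≠ 0 := pow_ne_zero _ (sub_ne_zero.2 h)
    have hd2 : (p.1 - p.2) ^ 2 ≤ D ^ 2 := by
      have := sq_abs (p.1 - p.2)
      nlinarith [abs_nonneg (p.1 - p.2)]
    calc (u p.1 - u p.2) ^ 2 = (u p.1 - u p.2) ^ 2 / (p.1 - p.2) ^ 2 * (p.1 - p.2) ^ 2 := by
          field_simp
      _ ≤ (u p.1 - u p.2) ^ 2 / (p.1 - p.2) ^ 2 * D ^ 2 := by
          apply mul_le_mul_of_nonneg_left hd2 (by positivity)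
      _ = D ^ 2 * ((u p.1 - u p.2) ^ 2 / (p.1 - p.2) ^ 2) := by ring

private lemma box_bound (hu : Measurable u) {A B : Set ℝ} {D : ℝ}
    (h : ∀ s ∈ A, ∀ t ∈ B, |s - t| ≤ D) :
    (∫⁻ p in A ×ˢ B, ENNReal.ofReal ((u p.1 - u p.2) ^ 2)) ≤
      ENNReal.ofReal (D ^ 2) *
        ∫⁻ p in A ×ˢ B, ENNReal.ofReal ((u p.1 - u p.2) ^ 2 / (p.1 - p.2) ^ 2) :=
  calc (∫⁻ p in A ×ˢ B, ENNReal.ofReal ((u p.1 - u p.2) ^ 2))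
      ≤ ∫⁻ p in A ×ˢ B, ENNReal.ofReal (D ^ 2) *
          ENNReal.ofReal ((u p.1 - u p.2) ^ 2 / (p.1 - p.2) ^ 2) := by
        refine setLIntegral_mono (measurable_const.mul (ker_meas hu)) ?_
        rintro ⟨s, t⟩ ⟨hs, ht⟩
        exact sq_le_ker (h s hs t ht)
    _ = _ := lintegral_const_mul _ (ker_meas hu)

private lemma locInt (hu : Measurable u)
    (hH : (∫⁻ p : ℝ × ℝ, ENNReal.ofReal ((u p.1 - u p.2) ^ 2 / (p.1 - p.2) ^ 2)) ≠ ⊤)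
    (c d : ℝ) : IntegrableOn u (Ioc c d) := by
  rcases le_or_gt d c with hdc | hcd
  · rw [Ioc_eq_empty (not_lt.2 hdc)]; exact integrableOn_empty
  set s := Ioc c d with hs
  have hsm : MeasurableSet s := measurableSet_Ioc
  have hbox : (∫⁻ p in s ×ˢ s, ENNReal.ofReal ((u p.1 - u p.2) ^ 2)) ≠ ⊤ := by
    refine ne_top_of_le_ne_top ?_ ((box_bound hu (A := s) (B := s) (D := d - c) ?_).trans
      (mul_le_mul_right (setLIntegral_le_lintegral _ _) _))
    · exact ENNReal.mul_ne_top ENNReal.ofReal_ne_top hH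
    · rintro x ⟨hx1, hx2⟩ y ⟨hy1, hy2⟩
      rw [abs_sub_le_iff]; constructor <;> linarith
  -- iterated form
  have hiter : (∫⁻ x in s, ∫⁻ y in s, ENNReal.ofReal ((u x - u y) ^ 2)) ≠ ⊤ := by
    have heq : (∫⁻ p in s ×ˢ s, ENNReal.ofReal ((u p.1 - u p.2) ^ 2))
        = ∫⁻ x in s, ∫⁻ y in s, ENNReal.ofReal ((u x - u y) ^ 2) := by
      rw [Measure.volume_eq_prod ℝ ℝ, ← Measure.prod_restrict]
      exact lintegral_prod _ ((ENNReal.measurable_ofReal.comp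
        (((hu.comp measurable_fst).sub (hu.comp measurable_snd)).pow_const 2)).aemeasurable)
    rwa [heq] at hbox
  -- a.e. x, inner integral finite; and s has positive measure
  have hFmeas : Measurable (fun x => ∫⁻ y in s, ENNReal.ofReal ((u x - u y) ^ 2)) := by
    apply Measurable.lintegral_prod_right
    exact ENNReal.measurable_ofReal.comp
      (((hu.comp measurable_fst).sub (hu.comp measurable_snd)).pow_const 2)
  have hae : ∀ᵐ x ∂(volume.restrict s),
      (∫⁻ y in s, ENNReal.ofReal ((u x - u y) ^ 2)) < ⊤ := ae_lt_top hFmeas hiter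
  have hne : (volume.restrict s) ≠ 0 := by
    intro h0
    have : (volume.restrict s) univ = 0 := by rw [h0]; rfl
    rw [Measure.restrict_apply_univ] at this
    rw [hs, Real.volume_Ioc] at this
    exact (ENNReal.ofReal_pos.2 (by linarith)).ne' this
  haveI : (ae (volume.restrict s)).NeBot := ae_neBot.mpr hne
  obtain ⟨x₀, hx₀⟩ := hae.exists
  -- now integrability
  constructor
  · exact hu.aestronglyMeasurable
  · rw [hasFiniteIntegral_iff_norm]
    have hbd : ∀ y : ℝ, ENNReal.ofReal ‖u y‖ ≤
        ENNReal.ofReal (1/2 + |u x₀|) + ENNReal.ofReal ((u x₀ - u y) ^ 2) := by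
      intro y
      rw [← ENNReal.ofReal_add (by positivity) (by positivity)]
      apply ENNReal.ofReal_le_ofReal
      rw [Real.norm_eq_abs]
      have h1 : |u y - u x₀| ≤ (1 + (u y - u x₀) ^ 2) / 2 := by
        nlinarith [sq_nonneg (|u y - u x₀| - 1), sq_abs (u y - u x₀), abs_nonneg (u y - u x₀)]
      have h2 : |u y| ≤ |u y - u x₀| + |u x₀| := by
        calc |u y| = |(u y - u x₀) + u x₀| := by ring_nf
          _ ≤ |u y - u x₀| + |u x₀| := abs_add_le _ _
      nlinarith [sq_nonneg (u y - u x₀), sq_abs (u y - u x₀)]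
    calc (∫⁻ y in s, ENNReal.ofReal ‖u y‖)
        ≤ ∫⁻ y in s, (ENNReal.ofReal (1/2 + |u x₀|) + ENNReal.ofReal ((u x₀ - u y) ^ 2)) :=
          lintegral_mono fun y => hbd y
      _ = ENNReal.ofReal (1/2 + |u x₀|) * volume s
            + ∫⁻ y in s, ENNReal.ofReal ((u x₀ - u y) ^ 2) := by
          rw [lintegral_add_left measurable_const, lintegral_const, Measure.restrict_apply_univ]
      _ < ⊤ := by
          apply ENNReal.add_lt_top.2
          constructor
          · exact ENNReal.mul_lt_top ENNReal.ofReal_lt_top (by rw [hs, Real.volume_Ioc]; exact ENNReal.ofReal_lt_top)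
          · exact hx₀

private lemma mean_diff (hu : Measurable u)
    (hH : (∫⁻ p : ℝ × ℝ, ENNReal.ofReal ((u p.1 - u p.2) ^ 2 / (p.1 - p.2) ^ 2)) ≠ ⊤)
    (c L : ℝ) (hL : 0 < L) :
    |(∫ x in Ioc (c+L) (c+L+L), u x) / L - (∫ x in Ioc c (c+L), u x) / L| ≤
      2 * Real.sqrt (∫⁻ p in Ioc c (c+L) ×ˢ Ioc (c+L) (c+L+L),
        ENNReal.ofReal ((u p.1 - u p.2) ^ 2 / (p.1 - p.2) ^ 2)).toReal := by
  set A := Ioc c (c+L) with hA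
  set B := Ioc (c+L) (c+L+L) with hB
  set Hbox := (∫⁻ p in A ×ˢ B,
    ENNReal.ofReal ((u p.1 - u p.2) ^ 2 / (p.1 - p.2) ^ 2)) with hHbox
  have hHboxne : Hbox ≠ ⊤ := ne_top_of_le_ne_top hH (setLIntegral_le_lintegral _ _)
  set h := Hbox.toReal with hh
  have hh0 : 0 ≤ h := ENNReal.toReal_nonneg
  have hvolA : volume A = ENNReal.ofReal L := by rw [hA, Real.volume_Ioc]; ring_nf
  have hvolB : volume B = ENNReal.ofReal L := by rw [hB, Real.volume_Ioc]; ring_nf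
  -- the absolute double integral
  set F := fun s : ℝ => ∫⁻ t in B, ENNReal.ofReal |u t - u s| with hF
  have hFmeas : Measurable F := by
    apply Measurable.lintegral_prod_right
    exact ENNReal.measurable_ofReal.comp
      ((hu.comp measurable_snd).sub (hu.comp measurable_fst)).abs
  set N := ∫⁻ s in A, F s with hN
  -- Step 1 : N as a product integral and Hölder bound
  have hNbox : N = ∫⁻ p in A ×ˢ B, ENNReal.ofReal |u p.2 - u p.1| := by
    rw [Measure.volume_eq_prod ℝ ℝ, ← Measure.prod_restrict]
    exact (lintegral_prod (fun p : ℝ × ℝ => ENNReal.ofReal |u p.2 - u p.1|)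
      ((ENNReal.measurable_ofReal.comp
      ((hu.comp measurable_snd).sub (hu.comp measurable_fst)).abs).aemeasurable)).symm
  have hN_le : N ≤ ENNReal.ofReal (2 * L^2 * Real.sqrt h) := by
    have hconj : Real.HolderConjugate 2 2 := Real.HolderConjugate.two_two
    have habs : AEMeasurable (fun p : ℝ × ℝ => ENNReal.ofReal |u p.2 - u p.1|)
        (volume.restrict (A ×ˢ B)) :=
      (ENNReal.measurable_ofReal.comp
        ((hu.comp measurable_snd).sub (hu.comp measurable_fst)).abs).aemeasurable
    have hhold := ENNReal.lintegral_mul_le_Lp_mul_Lq (volume.restrict (A ×ˢ B)) hconj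
      habs aemeasurable_const (g := fun _ => (1:ENNReal))
    simp only [Pi.mul_apply, mul_one, ENNReal.one_rpow, lintegral_const,
      Measure.restrict_apply_univ, one_mul] at hhold
    -- square term
    have hsq : (∫⁻ p in A ×ˢ B, ENNReal.ofReal |u p.2 - u p.1| ^ (2:ℝ))
        ≤ ENNReal.ofReal (4 * L^2) * Hbox := by
      have heq : ∀ p : ℝ × ℝ, ENNReal.ofReal |u p.2 - u p.1| ^ (2:ℝ)
          = ENNReal.ofReal ((u p.1 - u p.2) ^ 2) := by
        intro p
        rw [ENNReal.ofReal_rpow_of_nonneg (abs_nonneg _) (by norm_num)]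
        congr 1
        rw [show ((2:ℝ)) = ((2:ℕ):ℝ) by norm_num, Real.rpow_natCast, sq_abs]
        ring
      simp only [heq]
      refine le_trans (box_bound hu (D := 2*L) ?_) ?_
      · rintro s hs t ht
        rw [hA] at hs; rw [hB] at ht
        rw [abs_sub_le_iff]
        constructor <;> [skip; skip] <;>
          · obtain ⟨hs1, hs2⟩ := hs; obtain ⟨ht1, ht2⟩ := ht; linarith
      · rw [← hHbox]
        gcongr
        nlinarith
    have hvol : volume (A ×ˢ B) = ENNReal.ofReal L * ENNReal.ofReal L := by
      rw [Measure.volume_eq_prod ℝ ℝ, Measure.prod_prod, hvolA, hvolB]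
    have hfinal : (ENNReal.ofReal (4 * L^2) * Hbox) ^ (1/(2:ℝ))
          * (ENNReal.ofReal L * ENNReal.ofReal L) ^ (1/(2:ℝ))
        = ENNReal.ofReal (2 * L^2 * Real.sqrt h) := by
      rw [← ENNReal.ofReal_toReal hHboxne, ← hh,
        ← ENNReal.ofReal_mul (by positivity),
        ← ENNReal.ofReal_mul (by positivity),
        ENNReal.ofReal_rpow_of_nonneg (by positivity) (by norm_num),
        ENNReal.ofReal_rpow_of_nonneg (by positivity) (by norm_num),
        ← ENNReal.ofReal_mul (by positivity)]
      congr 1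
      rw [← Real.sqrt_eq_rpow, ← Real.sqrt_eq_rpow, ← Real.sqrt_mul (by positivity)]
      rw [show 4 * L^2 * h * (L*L) = (2 * L^2 * Real.sqrt h)^2 by
        rw [mul_pow, Real.sq_sqrt hh0]; ring]
      exact Real.sqrt_sq (by positivity)
    calc N ≤ (∫⁻ p in A ×ˢ B, ENNReal.ofReal |u p.2 - u p.1| ^ (2:ℝ)) ^ (1/(2:ℝ))
          * (volume (A ×ˢ B)) ^ (1/(2:ℝ)) := by
          rw [hNbox]; exact_mod_cast hhold
      _ ≤ (ENNReal.ofReal (4 * L^2) * Hbox) ^ (1/(2:ℝ))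
          * (ENNReal.ofReal L * ENNReal.ofReal L) ^ (1/(2:ℝ)) := by
          rw [hvol]; gcongr
      _ = ENNReal.ofReal (2 * L^2 * Real.sqrt h) := hfinal
  have hNne : N ≠ ⊤ := ne_top_of_le_ne_top ENNReal.ofReal_ne_top hN_le
  -- Step 2 : the signed double integral
  have hiB : IntegrableOn u B := by rw [hB]; exact locInt hu hH _ _
  have hiA : IntegrableOn u A := by rw [hA]; exact locInt hu hH _ _
  set CB := ∫ t in B, u t with hCB
  set CA := ∫ s in A, u s with hCA
  have hg_eq : ∀ s : ℝ, (∫ t in B, (u t - u s)) = CB - L * u s := by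
    intro s
    rw [integral_sub hiB (integrable_const _), integral_const, measureReal_restrict_apply_univ, measureReal_def,
      hvolB, ENNReal.toReal_ofReal hL.le, smul_eq_mul]
  have hn_int : Integrable (fun s => (F s).toReal) (volume.restrict A) :=
    integrable_toReal_of_lintegral_ne_top hFmeas.aemeasurable hNne
  have habs_le : ∀ s : ℝ, ‖CB - L * u s‖ ≤ (F s).toReal := by
    intro s
    rw [← hg_eq s]
    refine le_trans (norm_integral_le_integral_norm _) (le_of_eq ?_)
    have : ∀ t : ℝ, ‖u t - u s‖ = |u t - u s| := fun t => Real.norm_eq_abs _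
    simp only [this]
    rw [integral_eq_lintegral_of_nonneg_ae (f := fun t => |u t - u s|) (Eventually.of_forall fun t => abs_nonneg _)
      ((hu.sub measurable_const).abs.aestronglyMeasurable)]
  have hint_g : Integrable (fun s => CB - L * u s) (volume.restrict A) :=
    (integrable_const _).sub (hiA.const_mul _)
  have hgval : (∫ s in A, (CB - L * u s)) = L * CB - L * CA := by
    rw [integral_sub (integrable_const _) (hiA.const_mul _), integral_const,
      measureReal_restrict_apply_univ, measureReal_def, hvolA, ENNReal.toReal_ofReal hL.le, smul_eq_mul,
      integral_const_mul]
  have hmain : |L * CB - L * CA| ≤ 2 * L^2 * Real.sqrt h := by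
    rw [← hgval, ← Real.norm_eq_abs]
    refine le_trans (norm_integral_le_of_norm_le hn_int
      (Eventually.of_forall habs_le)) ?_
    have : (∫ s in A, (F s).toReal) = N.toReal := by
      rw [hN]
      exact integral_toReal hFmeas.aemeasurable (ae_lt_top hFmeas hNne)
    rw [this]
    exact ENNReal.toReal_le_of_le_ofReal (by positivity) hN_le
  -- conclude
  rw [div_sub_div_same, abs_div, abs_of_pos hL, div_le_iff₀ hL]
  rw [show L * CB - L * CA = L * (CB - CA) by ring, abs_mul, abs_of_pos hL] at hmain
  have h2 : |CB - CA| * L ≤ (2 * Real.sqrt h * L) * L := by nlinarith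
  exact le_of_mul_le_mul_right h2 hL

private lemma jensen (hu : Measurable u) {c d : ℝ} (hcd : c < d)
    (hi : IntegrableOn u (Ioc c d)) :
    ENNReal.ofReal ((d - c) * Real.exp ((∫ x in Ioc c d, u x) / (d - c))) ≤
      ∫⁻ x in Ioc c d, ENNReal.ofReal (Real.exp (u x)) := by
  have hL : (0:ℝ) < d - c := by linarith
  set m := (∫ x in Ioc c d, u x) / (d - c) with hm
  set g := fun x => Real.exp m * ((1 - m) + u x) with hg
  have hvol : volume (Ioc c d) = ENNReal.ofReal (d - c) := Real.volume_Ioc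
  have hgi : Integrable g (volume.restrict (Ioc c d)) :=
    ((integrable_const _).add hi).const_mul _
  have hgval : (∫ x in Ioc c d, g x) = (d - c) * Real.exp m := by
    rw [hg, integral_const_mul, integral_add (integrable_const _) hi, integral_const,
      measureReal_restrict_apply_univ, measureReal_def, hvol, ENNReal.toReal_ofReal hL.le, smul_eq_mul]
    have : (∫ x in Ioc c d, u x) = (d - c) * m := by
      rw [hm]; field_simp
    rw [this]; ring
  have hpt : ∀ x : ℝ, g x ≤ Real.exp (u x) := by
    intro x
    have h1 : (u x - m) + 1 ≤ Real.exp (u x - m) := Real.add_one_le_exp _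
    have h3 : (1 - m) + u x ≤ Real.exp (u x - m) := by linarith
    calc g x ≤ Real.exp m * Real.exp (u x - m) :=
          mul_le_mul_of_nonneg_left h3 (Real.exp_pos m).le
      _ = Real.exp (u x) := by rw [← Real.exp_add]; ring_nf
  calc ENNReal.ofReal ((d - c) * Real.exp m) = ENNReal.ofReal (∫ x in Ioc c d, g x) := by
        rw [hgval]
    _ ≤ ENNReal.ofReal (∫ x in Ioc c d, (g x ⊔ 0)) := by
        apply ENNReal.ofReal_le_ofReal
        exact integral_mono hgi hgi.pos_part (fun x => le_max_left _ _)
    _ = ∫⁻ x in Ioc c d, ENNReal.ofReal (g x ⊔ 0) :=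
        ofReal_integral_eq_lintegral_ofReal hgi.pos_part
          (Eventually.of_forall fun x => le_max_right _ _)
    _ = ∫⁻ x in Ioc c d, ENNReal.ofReal (g x) := by
        apply lintegral_congr
        intro x
        rcases le_total (g x) 0 with h | h
        · rw [max_eq_right h, ENNReal.ofReal_of_nonpos h, ENNReal.ofReal_zero]
        · rw [max_eq_left h]
    _ ≤ ∫⁻ x in Ioc c d, ENNReal.ofReal (Real.exp (u x)) :=
        lintegral_mono fun x => ENNReal.ofReal_le_ofReal (hpt x)

private lemma aux_Ici (hu : Measurable u)
    (hH : (∫⁻ p : ℝ × ℝ, ENNReal.ofReal ((u p.1 - u p.2) ^ 2 / (p.1 - p.2) ^ 2)) ≠ ⊤)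
    (a : ℝ) : (∫⁻ x in Ici a, ENNReal.ofReal (Real.exp (u x))) = ⊤ := by
  by_contra hT
  set T := ∫⁻ x in Ici a, ENNReal.ofReal (Real.exp (u x)) with hTdef
  set C := T.toReal with hCdef
  set m : ℕ → ℝ := fun k => (∫ x in Ioc a (a + 2^k), u x) / 2^k with hmdef
  set m' : ℕ → ℝ := fun k => (∫ x in Ioc (a + 2^k) (a + 2^(k+1)), u x) / 2^k with hm'def
  set Hk : ℕ → ENNReal := fun k => ∫⁻ p in Ioc a (a + 2^k) ×ˢ Ioc (a + 2^k) (a + 2^(k+1)),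
    ENNReal.ofReal ((u p.1 - u p.2) ^ 2 / (p.1 - p.2) ^ 2) with hHkdef
  have hpow : ∀ k : ℕ, (0:ℝ) < 2^k := fun k => by positivity
  have hsplit : ∀ k : ℕ, a + 2^(k+1) = (a + 2^k) + 2^k := by
    intro k; rw [pow_succ]; ring
  have hlog2 : (0:ℝ) < Real.log 2 := Real.log_pos (by norm_num)
  -- recursion for means
  have hrec : ∀ k : ℕ, m (k+1) = (m k + m' k) / 2 := by
    intro k
    have hsum : (∫ x in Ioc a (a + 2^(k+1)), u x)
        = (∫ x in Ioc a (a + 2^k), u x) + ∫ x in Ioc (a + 2^k) (a + 2^(k+1)), u x := by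
      have huni : Ioc a (a + 2^k) ∪ Ioc (a + 2^k) (a + 2^(k+1)) = Ioc a (a + 2^(k+1)) :=
        Set.Ioc_union_Ioc_eq_Ioc (by linarith [hpow k]) (by rw [hsplit k]; linarith [hpow k])
      rw [← huni]
      exact setIntegral_union (Set.Ioc_disjoint_Ioc_of_le le_rfl) measurableSet_Ioc
        (locInt hu hH _ _) (locInt hu hH _ _)
    show (∫ x in Ioc a (a + 2^(k+1)), u x) / 2^(k+1)
        = ((∫ x in Ioc a (a + 2^k), u x) / 2^k
          + (∫ x in Ioc (a + 2^k) (a + 2^(k+1)), u x) / 2^k) / 2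
    rw [hsum, pow_succ]
    have := hpow k
    field_simp
  -- increment bound
  have hdiff : ∀ k : ℕ, |m' k - m k| ≤ 2 * Real.sqrt (Hk k).toReal := by
    intro k
    have := mean_diff hu hH a (2^k) (hpow k)
    rw [← hsplit k] at this
    exact this
  -- disjoint boxes, summability
  have hdisj : Pairwise (Function.onFun Disjoint
      (fun k : ℕ => Ioc a (a + 2^k) ×ˢ Ioc (a + 2^k) (a + 2^(k+1)))) := by
    have key : ∀ j k : ℕ, j < k → Disjoint
        (Ioc a (a + 2^j) ×ˢ Ioc (a + 2^j) (a + 2^(j+1)))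
        (Ioc a (a + 2^k) ×ˢ Ioc (a + 2^k) (a + 2^(k+1))) := by
      intro j k hjk
      refine Set.disjoint_prod.2 (Or.inr ?_)
      rw [Set.Ioc_disjoint_Ioc]
      have h1 : (2:ℝ)^(j+1) ≤ 2^k := by
        apply pow_le_pow_right₀ (by norm_num) hjk
      refine le_trans (min_le_left _ _) ?_
      refine le_trans ?_ (le_max_right _ _)
      linarith
    intro j k hjk
    rcases hjk.lt_or_gt with h | h
    · exact key j k h
    · exact (key k j h).symm
  have hsumle : ∑' k : ℕ, Hk k ≠ ⊤ := by
    refine ne_top_of_le_ne_top hH ?_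
    rw [hHkdef]
    rw [← lintegral_iUnion (fun k => (measurableSet_Ioc.prod measurableSet_Ioc)) hdisj]
    exact setLIntegral_le_lintegral _ _
  have htend : Tendsto Hk atTop (nhds 0) := ENNReal.tendsto_atTop_zero_of_tsum_ne_top hsumle
  -- eventually small increments
  have hsmallev : ∀ᶠ k in atTop, Hk k < ENNReal.ofReal ((Real.log 2 / 4)^2) :=
    htend.eventually (gt_mem_nhds (by
      apply ENNReal.ofReal_pos.2; positivity))
  obtain ⟨K, hK⟩ := eventually_atTop.1 hsmallev
  have hsmall : ∀ k, K ≤ k → |m' k - m k| ≤ Real.log 2 / 2 := by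
    intro k hk
    have h1 : (Hk k).toReal ≤ (Real.log 2 / 4)^2 :=
      ENNReal.toReal_le_of_le_ofReal (by positivity) (hK k hk).le
    have h2 : Real.sqrt (Hk k).toReal ≤ Real.log 2 / 4 := by
      refine le_trans (Real.sqrt_le_sqrt h1) ?_
      rw [Real.sqrt_sq (by positivity)]
    calc |m' k - m k| ≤ 2 * Real.sqrt (Hk k).toReal := hdiff k
      _ ≤ 2 * (Real.log 2 / 4) := by linarith
      _ = Real.log 2 / 2 := by ring
  -- upper bound from finiteness
  have hTne : T ≠ ⊤ := hT
  have hupper0 : ∀ k : ℕ, (2:ℝ)^k * Real.exp (m' k) ≤ C := by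
    intro k
    have hcd : a + 2^k < a + 2^(k+1) := by
      rw [hsplit k]; linarith [hpow k]
    have hj := jensen hu hcd (locInt hu hH _ _)
    rw [show a + 2^(k+1) - (a + 2^k) = (2:ℝ)^k by rw [hsplit k]; ring] at hj
    have hsub : Ioc (a + 2^k) (a + 2^(k+1)) ⊆ Ici a := by
      intro x hx
      have := hx.1
      have := hpow k
      simp only [mem_Ici]
      linarith
    have hle : ENNReal.ofReal ((2:ℝ)^k * Real.exp (m' k)) ≤ T := by
      refine le_trans hj (le_trans (lintegral_mono_set hsub) le_rfl)
    exact (ENNReal.ofReal_le_iff_le_toReal hTne).1 hle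
  have hC0 : 0 < C := by
    have := hupper0 0
    have : (0:ℝ) < 2^0 * Real.exp (m' 0) := by positivity
    linarith [hupper0 0, this]
  have hupper : ∀ k : ℕ, m' k ≤ Real.log C - k * Real.log 2 := by
    intro k
    have hexp : Real.exp (m' k + k * Real.log 2) ≤ C := by
      rw [Real.exp_add, Real.exp_nat_mul, Real.exp_log (by norm_num : (0:ℝ) < 2)]
      calc Real.exp (m' k) * 2^k = 2^k * Real.exp (m' k) := by ring
        _ ≤ C := hupper0 k
    have := (Real.le_log_iff_exp_le hC0).2 hexp
    linarith
  -- lower bound by induction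
  have hlow : ∀ n : ℕ, m K - n * (Real.log 2 / 4) ≤ m (K + n) := by
    intro n
    induction n with
    | zero => simp
    | succ n ih =>
      have hs := hsmall (K + n) (Nat.le_add_right _ _)
      have habs := abs_le.1 hs
      have hr := hrec (K + n)
      have : m (K + (n+1)) = (m (K + n) + m' (K + n)) / 2 := by
        rw [← hr]; ring_nf
      rw [this]
      push_cast
      push_cast at ih
      linarith [habs.1]
  -- contradiction
  have hfinal : ∀ n : ℕ, (n : ℝ) * (3/4 * Real.log 2) ≤
      Real.log C - m K + Real.log 2 / 2 - K * Real.log 2 := by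
    intro n
    have h1 := hlow n
    have h2 := hsmall (K + n) (Nat.le_add_right _ _)
    have h3 := hupper (K + n)
    have habs := abs_le.1 h2
    push_cast at h3
    nlinarith [habs.1, habs.2]
  obtain ⟨n, hn⟩ := exists_nat_gt
    ((Real.log C - m K + Real.log 2 / 2 - K * Real.log 2) / (3/4 * Real.log 2))
  have := hfinal n
  rw [div_lt_iff₀ (by positivity)] at hn
  linarith

/-- **`e^u dx` has infinite mass on unbounded intervals for `u ∈ H^{1/2}(ℝ)`.**
Let `u : ℝ → ℝ` be measurable with finite `H^{1/2}(ℝ)` seminorm, i.e.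
`∬_{ℝ×ℝ} (u(s) − u(t))²/(s − t)² ds dt < ∞`. Then for every `a ∈ ℝ`,
`∫_{[a,∞)} e^{u(x)} dx = ∞` and `∫_{(−∞,a]} e^{u(x)} dx = ∞`. -/
theorem exp_H_half_infinite_mass (u : ℝ → ℝ) (hu : Measurable u)
    (hH : (∫⁻ p : ℝ × ℝ, ENNReal.ofReal ((u p.1 - u p.2) ^ 2 / (p.1 - p.2) ^ 2)) < ⊤) :
    ∀ a : ℝ,
      (∫⁻ x in Set.Ici a, ENNReal.ofReal (Real.exp (u x))) = ⊤ ∧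
      (∫⁻ x in Set.Iic a, ENNReal.ofReal (Real.exp (u x))) = ⊤ := by
  intro a
  have hHne := hH.ne
  constructor
  · exact aux_Ici hu hHne a
  · -- reflect
    set v : ℝ → ℝ := fun x => u (-x) with hv
    have hvmeas : Measurable v := hu.comp measurable_neg
    have hmp : MeasurePreserving (fun x : ℝ => -x) volume volume :=
      Measure.measurePreserving_neg _
    have hmp2 : MeasurePreserving (fun p : ℝ × ℝ => (-p.1, -p.2))
        (volume : Measure (ℝ × ℝ)) (volume : Measure (ℝ × ℝ)) := by
      rw [Measure.volume_eq_prod ℝ ℝ]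
      exact hmp.prod hmp
    have hHv : (∫⁻ p : ℝ × ℝ, ENNReal.ofReal ((v p.1 - v p.2) ^ 2 / (p.1 - p.2) ^ 2)) ≠ ⊤ := by
      have hkm : Measurable (fun p : ℝ × ℝ =>
          ENNReal.ofReal ((u p.1 - u p.2) ^ 2 / (p.1 - p.2) ^ 2)) := by
        apply ENNReal.measurable_ofReal.comp
        exact (((hu.comp measurable_fst).sub (hu.comp measurable_snd)).pow_const 2).div
          ((measurable_fst.sub measurable_snd).pow_const 2)
      have hco := hmp2.lintegral_comp
        (f := fun p : ℝ × ℝ => ENNReal.ofReal ((u p.1 - u p.2) ^ 2 / (p.1 - p.2) ^ 2)) hkm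
      have heq : (∫⁻ p : ℝ × ℝ, ENNReal.ofReal ((v p.1 - v p.2) ^ 2 / (p.1 - p.2) ^ 2))
          = ∫⁻ p : ℝ × ℝ, ENNReal.ofReal ((u (-p.1) - u (-p.2)) ^ 2 / ((-p.1) - (-p.2)) ^ 2) := by
        apply lintegral_congr
        intro p
        congr 1
        rw [hv]
        congr 1
        ring
      rw [heq]
      rw [hco]
      exact hHne
    have hIci := aux_Ici hvmeas hHv (-a)
    have hpre : (fun x : ℝ => -x) ⁻¹' (Ici (-a)) = Iic a := by
      ext x; simp
    have hemb : MeasurableEmbedding (fun x : ℝ => -x) :=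
      (Homeomorph.neg ℝ).measurableEmbedding
    have hrestr : volume.restrict (Ici (-a))
        = Measure.map (fun x : ℝ => -x) (volume.restrict (Iic a)) := by
      conv_lhs => rw [← hmp.map_eq]
      rw [hemb.restrict_map, hpre]
    rw [hrestr] at hIci
    have hfm : Measurable (fun x : ℝ => ENNReal.ofReal (Real.exp (v x))) := by
      apply ENNReal.measurable_ofReal.comp
      exact Real.measurable_exp.comp hvmeas
    rw [lintegral_map hfm measurable_neg] at hIci
    simp only [hv, neg_neg] at hIci
    exact hIci
end

section
/- An integer-valued VMO function is constant: let v : ℝ → ℝ be locally integrable with v(x) ∈ ℤ for almost every x ∈ ℝ, and suppose v has vanishing mean oscillation, i.e. sup over bounded intervals I with length |I| ≤ δ of (1/|I|)∫_I |v(x) − v_I| dx tends to 0 as δ → 0+. Then there exists n ∈ ℤ such that v(x) = n for almost every x ∈ ℝ. -/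
open MeasureTheory Set Filter Metric Topology

/-- The rounded value is the closest integer. -/
private lemma round_min (c : ℝ) (z : ℤ) : |c - round c| ≤ |c - z| := by
  rcases eq_or_ne z (round c) with h | h
  · rw [h]
  · have hz : z - round c ≠ 0 := sub_ne_zero.mpr h
    have h1 : (1 : ℝ) ≤ |(z : ℝ) - round c| := by
      have := Int.one_le_abs hz
      calc (1 : ℝ) ≤ |((z - round c : ℤ) : ℝ)| := by exact_mod_cast this
        _ = |(z : ℝ) - round c| := by push_cast; ring_nf
    have h2 : |c - round c| ≤ 1 / 2 := abs_sub_round c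
    have h3 : |(z : ℝ) - round c| ≤ |(z : ℝ) - c| + |c - round c| := abs_sub_le _ _ _
    have h4 : |c - (z : ℝ)| = |(z : ℝ) - c| := abs_sub_comm _ _
    linarith

/-- If `g` takes values close to integers on a set whose image contains the
interval between `g x` and `g y`, then the nearest integers at `x` and `y` agree. -/
private lemma no_half_integer {g : ℝ → ℝ} {s : Set ℝ} {x y : ℝ}
    (hsub : Icc (g x) (g y) ⊆ g '' s)
    (hd : ∀ t ∈ s, |g t - round (g t)| ≤ 1 / 100)
    (hx : x ∈ s) (hy : y ∈ s)
    (hlt : round (g x) < round (g y)) : False := by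
  set np := round (g x) with hnp
  set nq := round (g y) with hnq
  have hdx := abs_le.mp (hd x hx)
  have hdy := abs_le.mp (hd y hy)
  have hnqnp : (np : ℝ) + 1 ≤ (nq : ℝ) := by exact_mod_cast hlt
  have hmem : ((np : ℝ) + 1 / 2) ∈ Icc (g x) (g y) :=
    ⟨by linarith [hdx.1, hdx.2], by linarith [hdy.1, hdy.2]⟩
  obtain ⟨t, ht, hgt⟩ := hsub hmem
  have hr : round ((np : ℝ) + 1 / 2) = np + 1 := by
    rw [round_eq]
    have h5 : (np : ℝ) + 1 / 2 + 1 / 2 = ((np + 1 : ℤ) : ℝ) := by push_cast; ring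
    rw [h5, Int.floor_intCast]
  have := hd t ht
  rw [hgt, hr] at this
  have h6 : |(-(1 / 2) : ℝ)| ≤ 1 / 100 := by
    convert this using 2
    push_cast
    ring
  rw [abs_neg, abs_of_pos (by norm_num : (0:ℝ) < 1/2)] at h6
  linarith

/-- On an interval where a continuous function stays within `1/100` of integers,
the nearest integer is constant. -/
private lemma round_const {g : ℝ → ℝ} {p q : ℝ} (hpq : p ≤ q)
    (hg : ContinuousOn g (Icc p q))
    (hd : ∀ t ∈ Icc p q, |g t - round (g t)| ≤ 1 / 100) :
    round (g p) = round (g q) := by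
  rcases lt_trichotomy (round (g p)) (round (g q)) with h | h | h
  · exact absurd (no_half_integer (intermediate_value_Icc hpq hg) hd
      (left_mem_Icc.mpr hpq) (right_mem_Icc.mpr hpq) h) (fun h => h)
  · exact h
  · exact absurd (no_half_integer (intermediate_value_Icc' hpq hg) hd
      (right_mem_Icc.mpr hpq) (left_mem_Icc.mpr hpq) h) (fun h => h)

/-- **An integer-valued VMO function is constant.** Let `v : ℝ → ℝ` be locally integrable
with `v(x) ∈ ℤ` for almost every `x`, and suppose `v` has vanishing mean oscillation:
the supremum over bounded intervals `I` with `|I| ≤ δ` of the mean oscillation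
`(1/|I|)·∫_I |v − v_I|` tends to `0` as `δ → 0+`. Then `v` is a.e. equal to an integer
constant. -/
theorem integer_valued_VMO_constant (v : ℝ → ℝ)
    (hloc : LocallyIntegrable v volume)
    (hint : ∀ᵐ x : ℝ, ∃ n : ℤ, v x = (n : ℝ))
    (hVMO : ∀ η : ℝ, 0 < η → ∃ δ : ℝ, 0 < δ ∧ ∀ a b : ℝ, a < b → b - a ≤ δ →
      (b - a)⁻¹ *
          ∫ x in Set.Ioc a b, |v x - (b - a)⁻¹ * ∫ y in Set.Ioc a b, v y| ≤ η) :
    ∃ n : ℤ, ∀ᵐ x : ℝ, v x = (n : ℝ) := by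
  obtain ⟨δ, hδ, hosc⟩ := hVMO (1 / 100) (by norm_num)
  -- the mean of `v` over `Ioc a b`
  set m : ℝ → ℝ → ℝ := fun a b => (b - a)⁻¹ * ∫ x in Set.Ioc a b, v x with hm
  -- interval integrability
  have hii : ∀ a b : ℝ, IntervalIntegrable v volume a b := fun a b =>
    (hloc.integrableOn_isCompact isCompact_uIcc).intervalIntegrable
  -- Step 1: the mean over a short interval is within 1/100 of an integer
  have step1 : ∀ a b : ℝ, a < b → b - a ≤ δ → |m a b - round (m a b)| ≤ 1 / 100 := by
    intro a b hab hlen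
    have hba : (0 : ℝ) < b - a := sub_pos.mpr hab
    set c : ℝ := m a b with hc
    have hvint : IntegrableOn v (Ioc a b) volume :=
      (hloc.integrableOn_isCompact isCompact_Icc).mono_set Ioc_subset_Icc_self
    have hμ : volume (Ioc a b) < ⊤ := by
      rw [Real.volume_Ioc]; exact ENNReal.ofReal_lt_top
    have h1 : IntegrableOn (fun x => |v x - c|) (Ioc a b) volume :=
      (hvint.sub (integrableOn_const hμ.ne)).abs
    have h2 : IntegrableOn (fun _ : ℝ => |c - round c|) (Ioc a b) volume :=
      integrableOn_const hμ.ne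
    have hle : (fun _ : ℝ => |c - round c|) ≤ᵐ[volume.restrict (Ioc a b)]
        fun x => |v x - c| := by
      filter_upwards [ae_restrict_of_ae hint] with x hx
      obtain ⟨k, hk⟩ := hx
      rw [hk, abs_sub_comm (k:ℝ) c]
      exact round_min c k
    have hmono := setIntegral_mono_ae_restrict h2 h1 hle
    rw [setIntegral_const, smul_eq_mul] at hmono
    have hvol : (volume (Ioc a b)).toReal = b - a := by
      rw [Real.volume_Ioc, ENNReal.toReal_ofReal hba.le]
    rw [measureReal_def, hvol] at hmono
    have hB := hosc a b hab hlen
    have hinv : (0 : ℝ) < (b - a)⁻¹ := inv_pos.mpr hba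
    calc |c - round c| = (b - a)⁻¹ * ((b - a) * |c - round c|) := by
          field_simp
      _ ≤ (b - a)⁻¹ * ∫ x in Set.Ioc a b, |v x - c| :=
          mul_le_mul_of_nonneg_left hmono hinv.le
      _ ≤ 1 / 100 := hB
  -- Step 2: means are given by a continuous primitive
  set F : ℝ → ℝ := fun t => ∫ x in (0 : ℝ)..t, v x with hFdef
  have hF : Continuous F := intervalIntegral.continuous_primitive hii 0
  have hmeq : ∀ a b : ℝ, a < b → m a b = (b - a)⁻¹ * (F b - F a) := by
    intro a b hab
    have h3 : F b - F a = ∫ x in a..b, v x :=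
      intervalIntegral.integral_interval_sub_left (hii 0 b) (hii 0 a)
    rw [hm]
    simp only
    rw [h3, intervalIntegral.integral_of_le hab.le]
  -- Step 3a: the nearest integer to the mean over intervals of length δ is constant
  set g : ℝ → ℝ := fun t => δ⁻¹ * (F (t + δ) - F t) with hgdef
  have hgm : ∀ t : ℝ, g t = m t (t + δ) := by
    intro t
    rw [hmeq t (t + δ) (by linarith)]
    rw [show t + δ - t = δ by ring]
  have hgcont : Continuous g :=
    continuous_const.mul ((hF.comp (continuous_id.add continuous_const)).sub hF)
  have hgd : ∀ t : ℝ, |g t - round (g t)| ≤ 1 / 100 := by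
    intro t
    rw [hgm t]
    exact step1 t (t + δ) (by linarith) (by linarith)
  set n : ℤ := round (g 0) with hn
  have L1 : ∀ t : ℝ, round (m t (t + δ)) = n := by
    intro t
    rw [← hgm t]
    rcases le_total t 0 with h | h
    · exact round_const h hgcont.continuousOn (fun s _ => hgd s)
    · exact (round_const h hgcont.continuousOn (fun s _ => hgd s)).symm
  -- Step 3b: the same integer works for all short symmetric intervals
  have L2 : ∀ x ε : ℝ, 0 < ε → ε ≤ δ / 2 → round (m (x - ε) (x + ε)) = n := by
    intro x ε hε hεδ
    set h : ℝ → ℝ := fun e => (2 * e)⁻¹ * (F (x + e) - F (x - e)) with hhdef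
    have hheq : ∀ e : ℝ, 0 < e → h e = m (x - e) (x + e) := by
      intro e he
      rw [hmeq (x - e) (x + e) (by linarith)]
      rw [show x + e - (x - e) = 2 * e by ring]
    have hhcont : ContinuousOn h (Icc ε (δ / 2)) := by
      apply ContinuousOn.mul
      · apply ContinuousOn.inv₀ (continuous_const.mul continuous_id).continuousOn
        intro e he
        have : (0 : ℝ) < e := lt_of_lt_of_le hε he.1
        exact mul_ne_zero two_ne_zero this.ne'
      · exact ((hF.comp (continuous_const.add continuous_id)).sub
          (hF.comp (continuous_const.sub continuous_id))).continuousOn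
    have hhd : ∀ e ∈ Icc ε (δ / 2), |h e - round (h e)| ≤ 1 / 100 := by
      intro e he
      have he0 : (0 : ℝ) < e := lt_of_lt_of_le hε he.1
      rw [hheq e he0]
      exact step1 (x - e) (x + e) (by linarith) (by linarith [he.2])
    have hround := round_const hεδ hhcont hhd
    rw [hheq ε hε] at hround
    rw [hheq (δ / 2) (by linarith)] at hround
    rw [hround]
    rw [show x + δ / 2 = (x - δ / 2) + δ by ring]
    exact L1 (x - δ / 2)
  -- Step 4: Lebesgue differentiation
  have hae := IsUnifLocDoublingMeasure.ae_tendsto_average (μ := (volume : Measure ℝ))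
    hloc 1
  refine ⟨n, ?_⟩
  filter_upwards [hint, hae] with x hx hx'
  obtain ⟨k, hk⟩ := hx
  have htend : Tendsto (fun r : ℝ => ⨍ y in closedBall x r, v y) (𝓝[>] 0) (𝓝 (v x)) := by
    apply hx' (fun _ : ℝ => x) (fun r : ℝ => r) tendsto_id
    filter_upwards [self_mem_nhdsWithin] with r hr
    have : (0 : ℝ) < r := hr
    simpa [mem_closedBall] using by linarith
  have havg : ∀ r : ℝ, 0 < r → (⨍ y in closedBall x r, v y) = m (x - r) (x + r) := by
    intro r hr
    rw [Real.closedBall_eq_Icc, setAverage_eq, MeasureTheory.integral_Icc_eq_integral_Ioc,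
      measureReal_def, Real.volume_Icc, ENNReal.toReal_ofReal (by linarith), smul_eq_mul]
  have hev : ∀ᶠ r in 𝓝[>] (0 : ℝ), |(⨍ y in closedBall x r, v y) - (n : ℝ)| ≤ 1 / 100 := by
    filter_upwards [Ioc_mem_nhdsGT (half_pos hδ)] with r hr
    rw [havg r hr.1]
    have := step1 (x - r) (x + r) (by linarith [hr.1]) (by linarith [hr.2])
    rwa [L2 x r hr.1 hr.2] at this
  have habs : Tendsto (fun r : ℝ => |(⨍ y in closedBall x r, v y) - (n : ℝ)|)
      (𝓝[>] 0) (𝓝 |v x - (n : ℝ)|) := (htend.sub_const _).abs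
  have hfinal : |v x - (n : ℝ)| ≤ 1 / 100 := le_of_tendsto habs hev
  rw [hk] at hfinal ⊢
  have hkn : |((k - n : ℤ) : ℝ)| ≤ 1 / 100 := by exact_mod_cast hfinal
  have habs2 : |k - n| ≤ 0 := by
    by_contra hcon
    have h1 : (1 : ℤ) ≤ |k - n| := by omega
    have : (1 : ℝ) ≤ |((k - n : ℤ) : ℝ)| := by exact_mod_cast h1
    linarith
  have hz : k - n = 0 := abs_nonpos_iff.mp habs2
  have : k = n := by omega
  rw [this]
end
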